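/- arXiv:2101.09480 — 8 statements merged into one kernel-verified Lean document; each statement's English description precedes it below -/
import Mathlib

section
/- For every x ≠ 0, every t ∈ ℝ, and every v ∈ N_x, one has ‖ψ*_t(x)v‖ ≤ ‖exp(tA)‖·‖exp(−tA)‖·‖v‖. Consequently, for every τ > 0 there is a constant C_τ < ∞ (e.g. C_τ = sup_{|t| ≤ τ} ‖exp(tA)‖·‖exp(−tA)‖) such that ‖ψ*_t(x)v‖ ≤ C_τ·‖v‖ for all |t| ≤ τ, all x ≠ 0 and all v ∈ N_x; i.e., the scaled linear Poincaré flow is a bounded cocycle. -/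
open NormedSpace

/-- The scaled linear Poincaré flow of the linear flow `φ_t = exp (t • A)` in the linear
model of a hyperbolic singularity: for `x ≠ 0` and `v` in the normal space
`N_x = (ℝ ∙ A x)ᗮ`, `ψ*_t(x) v = (‖Ax‖/‖A φ_t x‖) • π_{φ_t x} (exp (t • A) v)`, where
`π_y` is the orthogonal projection onto `(ℝ ∙ A y)ᗮ`. -/
noncomputable def scaledLPF {d : ℕ}
    (A : EuclideanSpace ℝ (Fin d) →L[ℝ] EuclideanSpace ℝ (Fin d))
    (t : ℝ) (x v : EuclideanSpace ℝ (Fin d)) : EuclideanSpace ℝ (Fin d) :=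
  (‖A x‖ / ‖A (exp (t • A) x)‖) •
    ((Submodule.orthogonalProjectionOnto (ℝ ∙ (A (exp (t • A) x)))ᗮ (exp (t • A) v) :
      EuclideanSpace ℝ (Fin d)))

lemma exp_smul_neg_mul {d : ℕ}
    (A : EuclideanSpace ℝ (Fin d) →L[ℝ] EuclideanSpace ℝ (Fin d)) (t : ℝ) :
    exp ((-t) • A) * exp (t • A) = 1 := by
  have hc : Commute ((-t) • A) (t • A) := by
    ext y
    simp [ContinuousLinearMap.mul_apply, Commute, SemiconjBy, map_smul, smul_smul, mul_comm]
  letI : NormedAlgebra ℚ (EuclideanSpace ℝ (Fin d) →L[ℝ] EuclideanSpace ℝ (Fin d)) :=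
    NormedAlgebra.restrictScalars ℚ ℝ _
  rw [← exp_add_of_commute hc]
  have h0 : (-t) • A + t • A = 0 := by module
  rw [h0, exp_zero]

/-- The scaled linear Poincaré flow is a bounded cocycle: for `x ≠ 0`, `t ∈ ℝ`, and
`v ∈ N_x`, `‖ψ*_t(x) v‖ ≤ ‖exp(tA)‖·‖exp(−tA)‖·‖v‖`; consequently for every `τ > 0`
there is `C_τ` with `‖ψ*_t(x) v‖ ≤ C_τ·‖v‖` whenever `|t| ≤ τ`. -/
theorem scaledLPF_bounded_cocycle {d : ℕ}
    (A : EuclideanSpace ℝ (Fin d) →L[ℝ] EuclideanSpace ℝ (Fin d))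
    (hA : Function.Bijective A) :
    (∀ x : EuclideanSpace ℝ (Fin d), x ≠ 0 → ∀ t : ℝ, ∀ v ∈ (ℝ ∙ (A x))ᗮ,
      ‖scaledLPF A t x v‖ ≤ ‖exp (t • A)‖ * ‖exp ((-t) • A)‖ * ‖v‖) ∧
    (∀ τ : ℝ, 0 < τ → ∃ C : ℝ,
      (∀ t : ℝ, |t| ≤ τ → ‖exp (t • A)‖ * ‖exp ((-t) • A)‖ ≤ C) ∧
      ∀ t : ℝ, |t| ≤ τ → ∀ x : EuclideanSpace ℝ (Fin d), x ≠ 0 →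
        ∀ v ∈ (ℝ ∙ (A x))ᗮ, ‖scaledLPF A t x v‖ ≤ C * ‖v‖) := by
  have key : ∀ x : EuclideanSpace ℝ (Fin d), x ≠ 0 → ∀ t : ℝ,
      ∀ v : EuclideanSpace ℝ (Fin d),
      ‖scaledLPF A t x v‖ ≤ ‖exp (t • A)‖ * ‖exp ((-t) • A)‖ * ‖v‖ := by
    intro x hx t v
    set e := exp (t • A) with he
    set e' := exp ((-t) • A) with he'
    have hinv : e' * e = 1 := exp_smul_neg_mul A t
    -- x ↦ e' (e x) = x
    have hinv_apply : ∀ y, e' (e y) = y := by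
      intro y
      have := congrArg (fun f => f y) hinv
      simpa [ContinuousLinearMap.mul_apply] using this
    -- A y ≠ 0 for y ≠ 0
    have hex : e x ≠ 0 := by
      intro h
      apply hx
      rw [← hinv_apply x, h, map_zero]
    have hAex : A (e x) ≠ 0 := fun h => hex (hA.injective (by simpa using h))
    have hb : 0 < ‖A (e x)‖ := norm_pos_iff.mpr hAex
    -- ‖A x‖ ≤ ‖e'‖ * ‖A (e x)‖
    have hcAtA : Commute A (t • A) := by
      ext y
      simp [ContinuousLinearMap.mul_apply, Commute, SemiconjBy, map_smul]
    have hcomm : A * e = e * A := hcAtA.exp_right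
    have hAe : A (e x) = e (A x) := by
      have := congrArg (fun f => f x) hcomm
      simpa [ContinuousLinearMap.mul_apply] using this
    have hAx : ‖A x‖ ≤ ‖e'‖ * ‖A (e x)‖ := by
      have : A x = e' (A (e x)) := by rw [hAe, hinv_apply]
      calc ‖A x‖ = ‖e' (A (e x))‖ := by rw [← this]
        _ ≤ ‖e'‖ * ‖A (e x)‖ := e'.le_opNorm _
    have hproj : ‖((Submodule.orthogonalProjectionOnto (ℝ ∙ (A (e x)))ᗮ (e v) :
        EuclideanSpace ℝ (Fin d)))‖ ≤ ‖e‖ * ‖v‖ := by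
      calc ‖((Submodule.orthogonalProjectionOnto (ℝ ∙ (A (e x)))ᗮ (e v) :
          EuclideanSpace ℝ (Fin d)))‖
            ≤ ‖Submodule.orthogonalProjectionOnto (ℝ ∙ (A (e x)))ᗮ‖ * ‖e v‖ :=
            (Submodule.orthogonalProjectionOnto (ℝ ∙ (A (e x)))ᗮ).le_opNorm _
        _ ≤ 1 * ‖e v‖ :=
            mul_le_mul_of_nonneg_right (Submodule.orthogonalProjectionOnto_norm_le _) (norm_nonneg _)
        _ = ‖e v‖ := one_mul _
        _ ≤ ‖e‖ * ‖v‖ := e.le_opNorm _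
    have hratio : ‖A x‖ / ‖A (e x)‖ ≤ ‖e'‖ := by
      rw [div_le_iff₀ hb]; exact hAx
    have hnn : 0 ≤ ‖A x‖ / ‖A (e x)‖ := div_nonneg (norm_nonneg _) (norm_nonneg _)
    calc ‖scaledLPF A t x v‖
        = (‖A x‖ / ‖A (e x)‖) * ‖((Submodule.orthogonalProjectionOnto (ℝ ∙ (A (e x)))ᗮ (e v) :
            EuclideanSpace ℝ (Fin d)))‖ := by
          rw [scaledLPF, norm_smul, Real.norm_eq_abs, abs_of_nonneg hnn]
      _ ≤ (‖A x‖ / ‖A (e x)‖) * (‖e‖ * ‖v‖) := by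
          exact mul_le_mul_of_nonneg_left hproj hnn
      _ ≤ ‖e'‖ * (‖e‖ * ‖v‖) := by
          exact mul_le_mul_of_nonneg_right hratio
            (mul_nonneg (norm_nonneg _) (norm_nonneg _))
      _ = ‖e‖ * ‖e'‖ * ‖v‖ := by ring
  refine ⟨fun x hx t v _ => key x hx t v, fun τ hτ => ?_⟩
  have hcont : Continuous fun t : ℝ => ‖exp (t • A)‖ * ‖exp ((-t) • A)‖ := by
    letI : NormedAlgebra ℚ (EuclideanSpace ℝ (Fin d) →L[ℝ] EuclideanSpace ℝ (Fin d)) :=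
      NormedAlgebra.restrictScalars ℚ ℝ _
    apply Continuous.mul
    · exact (exp_continuous.comp (continuous_id.smul continuous_const)).norm
    · exact (exp_continuous.comp ((continuous_neg).smul continuous_const)).norm
  obtain ⟨t₀, _, ht₀⟩ := (isCompact_Icc (a := -τ) (b := τ)).exists_isMaxOn
    ⟨0, by constructor <;> linarith⟩ hcont.continuousOn
  have hle : ∀ t : ℝ, |t| ≤ τ →
      ‖exp (t • A)‖ * ‖exp ((-t) • A)‖ ≤ ‖exp (t₀ • A)‖ * ‖exp ((-t₀) • A)‖ :=
    fun t ht => ht₀ (Set.mem_Icc.mpr (abs_le.mp ht))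
  refine ⟨‖exp (t₀ • A)‖ * ‖exp ((-t₀) • A)‖, hle, ?_⟩
  intro t ht x hx v _
  calc ‖scaledLPF A t x v‖ ≤ ‖exp (t • A)‖ * ‖exp ((-t) • A)‖ * ‖v‖ := key x hx t v
    _ ≤ ‖exp (t₀ • A)‖ * ‖exp ((-t₀) • A)‖ * ‖v‖ :=
        mul_le_mul_of_nonneg_right (hle t ht) (norm_nonneg _)
end

section
/- For every α ∈ (0,1), setting T_α = (2·log C + 2·log(1/α))/(b − a), every x ∈ E ∖ {0} satisfies: the Lebesgue measure of the set {t ∈ ℝ : exp(tA)·x ∉ Dˢ_α ∪ Dᵘ_α} is at most T_α. (The time an orbit spends 'making the turn' between the stable cone and the unstable cone of a hyperbolic singularity is uniformly bounded, independently of the orbit.) -/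
open NormedSpace MeasureTheory

/-- The norm of the orthogonal projection of `x` onto the submodule `K`. -/
noncomputable def projComp {d : ℕ} (K : Submodule ℝ (EuclideanSpace ℝ (Fin d)))
    (x : EuclideanSpace ℝ (Fin d)) : ℝ :=
  ‖(K.orthogonalProjectionOnto x : EuclideanSpace ℝ (Fin d))‖

lemma exp_mem_of_invariant {d : ℕ} (A : EuclideanSpace ℝ (Fin d) →L[ℝ] EuclideanSpace ℝ (Fin d))
    (K : Submodule ℝ (EuclideanSpace ℝ (Fin d)))
    (hK : ∀ v ∈ K, A v ∈ K) {v : EuclideanSpace ℝ (Fin d)} (hv : v ∈ K) :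
    exp A v ∈ K := by
  have hpow : ∀ n : ℕ, (A ^ n) v ∈ K := by
    intro n
    induction n with
    | zero => simpa using hv
    | succ n ih =>
      rw [pow_succ']
      exact hK _ ih
  have h := NormedSpace.exp_series_hasSum_exp' (𝕂 := ℝ) A
  have h2 : HasSum (fun n : ℕ => ((Nat.factorial n : ℝ))⁻¹ • ((A ^ n) v)) (exp A v) := by
    simpa using h.mapL (ContinuousLinearMap.apply ℝ (EuclideanSpace ℝ (Fin d)) v)
  have hmem : ∀ s : Finset ℕ, ∑ n ∈ s, ((Nat.factorial n : ℝ))⁻¹ • ((A ^ n) v) ∈ K := fun s =>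
    Submodule.sum_mem _ fun n _ => Submodule.smul_mem _ _ (hpow n)
  exact (Submodule.closed_of_finiteDimensional K).mem_of_tendsto h2.tendsto_sum_nat
    (Filter.Eventually.of_forall fun n => hmem _)

set_option maxHeartbeats 1000000 in
set_option synthInstance.maxHeartbeats 400000 in
/-- Linear-model form of Lemma 3.2: for a hyperbolic linear flow `exp (t • A)` with
orthogonal invariant splitting `E = Es ⊕ Eu` (`Eu = Esᗮ`), rates `a < 0 < b` and
constant `C ≥ 1`, and for every `α ∈ (0,1)`, setting
`T_α = (2 log C + 2 log (1/α))/(b − a)`, every nonzero orbit spends at most time `T_α`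
outside the union of the cones `Dˢ_α = {xᵘ < α xˢ}` and `Dᵘ_α = {xˢ < α xᵘ}`. -/
theorem turning_time_bounded {d : ℕ}
    (A : EuclideanSpace ℝ (Fin d) →L[ℝ] EuclideanSpace ℝ (Fin d))
    (hA : Function.Bijective A)
    (Es : Submodule ℝ (EuclideanSpace ℝ (Fin d)))
    (C a b : ℝ) (hC : 1 ≤ C) (ha : a < 0) (hb : 0 < b)
    (hinvs : ∀ v ∈ Es, A v ∈ Es) (hinvu : ∀ v ∈ Esᗮ, A v ∈ Esᗮ)
    (hs : ∀ v ∈ Es, ∀ t : ℝ, 0 ≤ t → ‖exp (t • A) v‖ ≤ C * Real.exp (a * t) * ‖v‖)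
    (hu : ∀ v ∈ Esᗮ, ∀ t : ℝ, 0 ≤ t →
      C⁻¹ * Real.exp (b * t) * ‖v‖ ≤ ‖exp (t • A) v‖)
    (α : ℝ) (hα : α ∈ Set.Ioo (0 : ℝ) 1)
    (x : EuclideanSpace ℝ (Fin d)) (hx : x ≠ 0) :
    volume {t : ℝ | ¬ (projComp Esᗮ (exp (t • A) x) < α * projComp Es (exp (t • A) x) ∨
        projComp Es (exp (t • A) x) < α * projComp Esᗮ (exp (t • A) x))} ≤
      ENNReal.ofReal ((2 * Real.log C + 2 * Real.log (1 / α)) / (b - a)) := by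
  obtain ⟨hα0, hα1⟩ := hα
  have hC0 : (0:ℝ) < C := lt_of_lt_of_le one_pos hC
  have hba : (0:ℝ) < b - a := by linarith
  set R : ℝ := 2 * Real.log C + 2 * Real.log (1 / α) with hR
  have hR0 : 0 ≤ R := by
    have h1 : 0 ≤ Real.log C := Real.log_nonneg hC
    have h2 : 0 ≤ Real.log (1/α) := Real.log_nonneg (by
      rw [le_div_iff₀ hα0]; linarith)
    rw [hR]; linarith
  set T : ℝ := R / (b - a) with hT
  have hT0 : 0 ≤ T := div_nonneg hR0 hba.le
  obtain ⟨xs, hxs, xu, hxu, hsum⟩ : ∃ xs ∈ Es, ∃ xu ∈ Esᗮ, xs + xu = x :=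
    ⟨_, Submodule.coe_mem (Es.orthogonalProjectionOnto x), _,
      Submodule.coe_mem (Esᗮ.orthogonalProjectionOnto x),
      by
        have h := Es.starProjection_add_starProjection_orthogonal x
        simp only [Submodule.starProjection_apply] at h
        exact h⟩
  have hinv_s : ∀ t : ℝ, ∀ v ∈ Es, exp (t • A) v ∈ Es := fun t v hv =>
    exp_mem_of_invariant (t • A) Es
      (fun w hw => by
        have : (t • A) w = t • (A w) := rfl
        rw [this]; exact Submodule.smul_mem Es t (hinvs w hw)) hv
  have hinv_u : ∀ t : ℝ, ∀ v ∈ Esᗮ, exp (t • A) v ∈ Esᗮ := fun t v hv =>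
    exp_mem_of_invariant (t • A) Esᗮ
      (fun w hw => by
        have : (t • A) w = t • (A w) := rfl
        rw [this]; exact Submodule.smul_mem Esᗮ t (hinvu w hw)) hv
  have hps : ∀ t : ℝ, projComp Es (exp (t • A) x) = ‖exp (t • A) xs‖ := by
    intro t
    have h1 : exp (t • A) x = exp (t • A) xs + exp (t • A) xu := by
      conv_lhs => rw [← hsum]
      exact map_add _ _ _
    have h2 : (Es.orthogonalProjectionOnto (exp (t • A) xs) : EuclideanSpace ℝ (Fin d))
        = exp (t • A) xs := Submodule.starProjection_eq_self_iff.2 (hinv_s t xs hxs)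
    have h3 : Es.orthogonalProjectionOnto (exp (t • A) xu) = 0 :=
      Submodule.orthogonalProjectionOnto_apply_of_mem_orthogonal (hinv_u t xu hxu)
    simp only [projComp, h1, map_add, h3, add_zero, Submodule.coe_add, Submodule.coe_zero, h2]
  have hpu : ∀ t : ℝ, projComp Esᗮ (exp (t • A) x) = ‖exp (t • A) xu‖ := by
    intro t
    have h1 : exp (t • A) x = exp (t • A) xs + exp (t • A) xu := by
      conv_lhs => rw [← hsum]
      exact map_add _ _ _
    have h2 : (Esᗮ.orthogonalProjectionOnto (exp (t • A) xu) : EuclideanSpace ℝ (Fin d))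
        = exp (t • A) xu := Submodule.starProjection_eq_self_iff.2 (hinv_u t xu hxu)
    have h3 : Esᗮ.orthogonalProjectionOnto (exp (t • A) xs) = 0 :=
      Submodule.orthogonalProjectionOnto_orthogonal_apply_eq_zero (hinv_s t xs hxs)
    simp only [projComp, h1, map_add, h3, zero_add, Submodule.coe_add, Submodule.coe_zero]
    rw [h2]
  have hflow : ∀ (τ t : ℝ) (v : EuclideanSpace ℝ (Fin d)),
      exp ((τ + t) • A) v = exp (τ • A) (exp (t • A) v) := by
    intro τ t v
    have hcomm : Commute (τ • A) (t • A) := by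
      unfold Commute SemiconjBy
      ext w
      simp [ContinuousLinearMap.mul_apply, _root_.map_smul, smul_smul, mul_comm τ t, mul_left_comm]
    have h1 : (τ + t) • A = τ • A + t • A := add_smul τ t A
    rw [h1, NormedSpace.exp_add_of_commute_of_mem_ball (𝕂 := ℝ) hcomm
      ((NormedSpace.expSeries_radius_eq_top ℝ
        (EuclideanSpace ℝ (Fin d) →L[ℝ] EuclideanSpace ℝ (Fin d))).symm ▸ edist_lt_top _ _)
      ((NormedSpace.expSeries_radius_eq_top ℝ
        (EuclideanSpace ℝ (Fin d) →L[ℝ] EuclideanSpace ℝ (Fin d))).symm ▸ edist_lt_top _ _)]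
    rfl
  have hexp_ne : ∀ (t : ℝ) (v : EuclideanSpace ℝ (Fin d)), exp (t • A) v = 0 → v = 0 := by
    intro t v hv
    have h0 := hflow (-t) t v
    have hz : ((-t) + t) • A = 0 := by rw [neg_add_cancel]; exact zero_smul ℝ A
    rw [hv, map_zero, hz, NormedSpace.exp_zero] at h0
    simpa using h0
  set S := {t : ℝ | ¬ (projComp Esᗮ (exp (t • A) x) < α * projComp Es (exp (t • A) x) ∨
        projComp Es (exp (t • A) x) < α * projComp Esᗮ (exp (t • A) x))} with hS
  have hSmem : ∀ t : ℝ, t ∈ S ↔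
      α * ‖exp (t • A) xs‖ ≤ ‖exp (t • A) xu‖ ∧
      α * ‖exp (t • A) xu‖ ≤ ‖exp (t • A) xs‖ := by
    intro t
    rw [hS, Set.mem_setOf_eq, hps, hpu]
    push_neg
    rfl
  have hupos : ∀ t ∈ S, 0 < ‖exp (t • A) xu‖ ∧ 0 < ‖exp (t • A) xs‖ := by
    intro t ht
    obtain ⟨h1, h2⟩ := (hSmem t).1 ht
    have hboth : ¬ (‖exp (t • A) xs‖ = 0 ∧ ‖exp (t • A) xu‖ = 0) := by
      rintro ⟨e1, e2⟩
      have hz : exp (t • A) x = 0 := by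
        conv_lhs => rw [← hsum]
        rw [map_add, norm_eq_zero.1 e1, norm_eq_zero.1 e2, add_zero]
      exact hx (hexp_ne t x hz)
    have hss : 0 ≤ ‖exp (t • A) xs‖ := norm_nonneg _
    have hsu : 0 ≤ ‖exp (t • A) xu‖ := norm_nonneg _
    have hu0 : 0 < ‖exp (t • A) xu‖ := by
      rcases hsu.lt_or_eq with h | h
      · exact h
      · exfalso
        apply hboth
        constructor
        · nlinarith
        · exact h.symm
    constructor
    · exact hu0
    · nlinarith
  have key : ∀ t1 ∈ S, ∀ t2 ∈ S, t1 ≤ t2 → t2 - t1 ≤ T := by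
    intro t1 ht1 t2 ht2 h12
    set τ := t2 - t1 with hτ
    have hτ0 : 0 ≤ τ := by simp only [hτ]; linarith
    obtain ⟨h1a, h1b⟩ := (hSmem t1).1 ht1
    obtain ⟨h2a, h2b⟩ := (hSmem t2).1 ht2
    obtain ⟨hu1, hs1⟩ := hupos t1 ht1
    set u1 := ‖exp (t1 • A) xu‖
    set s1 := ‖exp (t1 • A) xs‖
    set u2 := ‖exp (t2 • A) xu‖
    set s2 := ‖exp (t2 • A) xs‖
    set eb := Real.exp (b * τ) with heb
    set ea := Real.exp (a * τ) with hea
    have hea0 : 0 < ea := Real.exp_pos _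
    have heb0 : 0 < eb := Real.exp_pos _
    have e_comp : ∀ v : EuclideanSpace ℝ (Fin d),
        exp (t2 • A) v = exp (τ • A) (exp (t1 • A) v) := by
      intro v
      rw [← hflow]
      congr 2
      simp only [hτ]; ring
    have hu2 : C⁻¹ * eb * u1 ≤ u2 := by
      rw [show u2 = ‖exp (τ • A) (exp (t1 • A) xu)‖ by rw [← e_comp]]
      exact hu _ (hinv_u t1 xu hxu) τ hτ0
    have hs2 : s2 ≤ C * ea * s1 := by
      rw [show s2 = ‖exp (τ • A) (exp (t1 • A) xs)‖ by rw [← e_comp]]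
      exact hs _ (hinv_s t1 xs hxs) τ hτ0
    have A1 : α * (C⁻¹ * eb * u1) ≤ α * u2 := mul_le_mul_of_nonneg_left hu2 hα0.le
    have A4 : s1 ≤ u1 / α := by
      rw [le_div_iff₀ hα0]
      nlinarith [h1a]
    have A5 : C * ea * s1 ≤ C * ea * (u1 / α) :=
      mul_le_mul_of_nonneg_left A4 (by positivity)
    have comb : α * (C⁻¹ * eb * u1) ≤ C * ea * (u1 / α) :=
      le_trans (le_trans A1 h2b) (le_trans hs2 A5)
    have comb2 : α ^ 2 * eb * u1 ≤ C ^ 2 * ea * u1 := by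
      have h := mul_le_mul_of_nonneg_left comb (show (0:ℝ) ≤ α * C by positivity)
      have hCne : C ≠ 0 := ne_of_gt hC0
      have hαne : α ≠ 0 := ne_of_gt hα0
      calc α ^ 2 * eb * u1 = (α * C) * (α * (C⁻¹ * eb * u1)) := by
            field_simp
        _ ≤ (α * C) * (C * ea * (u1 / α)) := h
        _ = C ^ 2 * ea * u1 := by field_simp
    have comb3 : α ^ 2 * eb ≤ C ^ 2 * ea := by nlinarith [comb2, hu1]
    have hexpR : Real.exp R = C ^ 2 * (1 / α) ^ 2 := by
      rw [hR, Real.exp_add, two_mul, two_mul, Real.exp_add, Real.exp_add,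
        Real.exp_log hC0, Real.exp_log (by positivity : (0:ℝ) < 1 / α)]
      ring
    have hgoal : Real.exp ((b - a) * τ) ≤ Real.exp R := by
      rw [show (b - a) * τ = b * τ - a * τ by ring, Real.exp_sub, hexpR, ← heb, ← hea,
        div_le_iff₀ hea0]
      have hαne : α ≠ 0 := ne_of_gt hα0
      calc eb = (1 / α) ^ 2 * (α ^ 2 * eb) := by field_simp
        _ ≤ (1 / α) ^ 2 * (C ^ 2 * ea) := mul_le_mul_of_nonneg_left comb3 (by positivity)
        _ = C ^ 2 * (1 / α) ^ 2 * ea := by ring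
    have hfin : (b - a) * τ ≤ R := Real.exp_le_exp.1 hgoal
    rw [hT, le_div_iff₀ hba]
    calc (t2 - t1) * (b - a) = (b - a) * τ := by rw [hτ]; ring
      _ ≤ R := hfin
  rcases Set.eq_empty_or_nonempty S with hemp | ⟨t0, ht0⟩
  · rw [hemp]
    simp
  · have hbdd : BddBelow S := ⟨t0 - T, fun s hs => by
      rcases le_total s t0 with h | h
      · have := key s hs t0 ht0 h; linarith
      · linarith⟩
    have hsub : S ⊆ Set.Icc (sInf S) (sInf S + T) := by
      intro s hs
      refine ⟨csInf_le hbdd hs, ?_⟩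
      have hlb : s - T ≤ sInf S := le_csInf ⟨t0, ht0⟩ (fun t1 ht1 => by
        rcases le_total t1 s with h | h
        · have := key t1 ht1 s hs h; linarith
        · linarith)
      linarith
    calc volume S ≤ volume (Set.Icc (sInf S) (sInf S + T)) := measure_mono hsub
      _ = ENNReal.ofReal T := by rw [Real.volume_Icc, add_sub_cancel_left]
end

section
/- Fix r > 0 and α ∈ (0,1). Let x_i ∈ E ∖ {0} be a sequence with x_i → 0, and suppose that for every i the entry time t_i⁻ = sup{t > 0 : exp(−sA)x_i ∈ closedBall(0,r) for all s ∈ [0,t]} and the exit time t_i⁺ = sup{t > 0 : exp(sA)x_i ∈ closedBall(0,r) for all s ∈ [0,t]} are finite. Then t_i⁻ + t_i⁺ → ∞, and the fraction of time the orbit spends in the two cones tends to one: (1/(t_i⁻ + t_i⁺)) · Leb{t ∈ (−t_i⁻, t_i⁺) : exp(tA)x_i ∈ Dˢ_α ∪ Dᵘ_α} → 1 as i → ∞. -/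
set_option maxHeartbeats 1000000
set_option synthInstance.maxHeartbeats 100000


open NormedSpace MeasureTheory Filter

section Helpers
variable {E : Type*} [NormedAddCommGroup E] [NormedSpace ℝ E] [CompleteSpace E]

omit [CompleteSpace E] in
lemma pow_mem_of_inv (K : Submodule ℝ E) (B : E →L[ℝ] E) (h : ∀ v ∈ K, B v ∈ K) :
    ∀ n : ℕ, ∀ v ∈ K, (B ^ n) v ∈ K := by
  intro n
  induction n with
  | zero => intro v hv; simpa using hv
  | succ n ih =>
    intro v hv
    rw [pow_succ, ContinuousLinearMap.mul_apply]
    exact ih _ (h v hv)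

lemma exp_mem_of_inv (K : Submodule ℝ E) (hK : IsClosed (K : Set E))
    (B : E →L[ℝ] E) (h : ∀ v ∈ K, B v ∈ K) : ∀ v ∈ K, NormedSpace.exp B v ∈ K := by
  intro v hv
  have hsum : HasSum (fun n : ℕ => (((n.factorial : ℝ))⁻¹ • B ^ n) v) (NormedSpace.exp B v) :=
    (exp_series_hasSum_exp' (𝕂 := ℝ) B).mapL (ContinuousLinearMap.apply ℝ E v)
  refine hK.mem_of_tendsto hsum.tendsto_sum_nat (Filter.Eventually.of_forall fun s => ?_)
  exact K.sum_mem fun n _ => by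
    simpa using K.smul_mem _ (pow_mem_of_inv K B h n v hv)

lemma exp_add_apply (B : E →L[ℝ] E) (s t : ℝ) (y : E) :
    NormedSpace.exp ((s + t) • B) y = NormedSpace.exp (s • B) (NormedSpace.exp (t • B) y) := by
  let +nondep : NormedAlgebra ℚ (E →L[ℝ] E) := .restrictScalars ℚ ℝ (E →L[ℝ] E)
  rw [add_smul, exp_add_of_commute (ContinuousLinearMap.ext fun v => by
    simp [ContinuousLinearMap.mul_apply, ContinuousLinearMap.smul_apply, smul_smul, mul_comm])]
  rfl

lemma exp_neg_cancel (B : E →L[ℝ] E) (t : ℝ) (y : E) :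
    NormedSpace.exp ((-t) • B) (NormedSpace.exp (t • B) y) = y := by
  rw [← exp_add_apply, neg_add_cancel, zero_smul, exp_zero, ContinuousLinearMap.one_apply]

end Helpers

/-- Linear-model form of Lemma 3.3: for orbit segments through points `x_i → 0` of a
hyperbolic linear flow, crossing the ball `closedBall 0 r`, the total crossing times
`t_i⁻ + t_i⁺` tend to infinity and the fraction of time spent in the union of the stable
cone `Dˢ_α` and the unstable cone `Dᵘ_α` tends to one. -/
theorem time_in_cones_full_proportion {d : ℕ}
    (A : EuclideanSpace ℝ (Fin d) →L[ℝ] EuclideanSpace ℝ (Fin d))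
    (hA : Function.Bijective A)
    (Es : Submodule ℝ (EuclideanSpace ℝ (Fin d)))
    (C a b : ℝ) (hC : 1 ≤ C) (ha : a < 0) (hb : 0 < b)
    (hinvs : ∀ v ∈ Es, A v ∈ Es) (hinvu : ∀ v ∈ Esᗮ, A v ∈ Esᗮ)
    (hs : ∀ v ∈ Es, ∀ t : ℝ, 0 ≤ t → ‖NormedSpace.exp (t • A) v‖ ≤ C * Real.exp (a * t) * ‖v‖)
    (hu : ∀ v ∈ Esᗮ, ∀ t : ℝ, 0 ≤ t →
      C⁻¹ * Real.exp (b * t) * ‖v‖ ≤ ‖NormedSpace.exp (t • A) v‖)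
    (r α : ℝ) (hr : 0 < r) (hα : α ∈ Set.Ioo (0 : ℝ) 1)
    (x : ℕ → EuclideanSpace ℝ (Fin d)) (hx0 : ∀ i, x i ≠ 0)
    (hxlim : Tendsto x atTop (nhds 0))
    (tm tp : ℕ → ℝ)
    (htm : ∀ i, tm i = sSup {t : ℝ | 0 < t ∧ ∀ s ∈ Set.Icc (0 : ℝ) t,
      NormedSpace.exp ((-s) • A) (x i) ∈ Metric.closedBall (0 : EuclideanSpace ℝ (Fin d)) r})
    (htp : ∀ i, tp i = sSup {t : ℝ | 0 < t ∧ ∀ s ∈ Set.Icc (0 : ℝ) t,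
      NormedSpace.exp (s • A) (x i) ∈ Metric.closedBall (0 : EuclideanSpace ℝ (Fin d)) r})
    (hbddm : ∀ i, BddAbove {t : ℝ | 0 < t ∧ ∀ s ∈ Set.Icc (0 : ℝ) t,
      NormedSpace.exp ((-s) • A) (x i) ∈ Metric.closedBall (0 : EuclideanSpace ℝ (Fin d)) r})
    (hbddp : ∀ i, BddAbove {t : ℝ | 0 < t ∧ ∀ s ∈ Set.Icc (0 : ℝ) t,
      NormedSpace.exp (s • A) (x i) ∈ Metric.closedBall (0 : EuclideanSpace ℝ (Fin d)) r}) :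
    Tendsto (fun i => tm i + tp i) atTop atTop ∧
    Tendsto (fun i =>
      (volume {t : ℝ | t ∈ Set.Ioo (-(tm i)) (tp i) ∧
        (projComp Esᗮ (NormedSpace.exp (t • A) (x i)) < α * projComp Es (NormedSpace.exp (t • A) (x i)) ∨
         projComp Es (NormedSpace.exp (t • A) (x i)) <
           α * projComp Esᗮ (NormedSpace.exp (t • A) (x i)))}).toReal / (tm i + tp i))
      atTop (nhds 1) := by
  obtain ⟨hα0, hα1⟩ := hα
  have hC0 : (0:ℝ) < C := lt_of_lt_of_le one_pos hC
  -- Part 1 : tm + tp → ∞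
  have key : ∀ T : ℝ, 0 < T → ∀ᶠ i in atTop, T ≤ tm i ∧ T ≤ tp i := by
    intro T hT
    -- a uniform bound for the flow on [-T, T]
    let +nondep : NormedAlgebra ℚ (EuclideanSpace ℝ (Fin d) →L[ℝ] EuclideanSpace ℝ (Fin d)) :=
      .restrictScalars ℚ ℝ _
    have hcont : Continuous fun s : ℝ => ‖NormedSpace.exp (s • A)‖ :=
      (exp_continuous.comp (continuous_id.smul continuous_const)).norm
    obtain ⟨s0, _, hs0⟩ := (isCompact_Icc (a := -T) (b := T)).exists_isMaxOn
      ⟨0, by constructor <;> linarith⟩ hcont.continuousOn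
    set M : ℝ := max ‖NormedSpace.exp (s0 • A)‖ 1 with hM
    have hM1 : (1:ℝ) ≤ M := le_max_right _ _
    have hM0 : (0:ℝ) < M := lt_of_lt_of_le one_pos hM1
    have hMb : ∀ s ∈ Set.Icc (-T) T, ∀ y : EuclideanSpace ℝ (Fin d),
        ‖NormedSpace.exp (s • A) y‖ ≤ M * ‖y‖ := by
      intro s hsmem y
      calc ‖NormedSpace.exp (s • A) y‖ ≤ ‖NormedSpace.exp (s • A)‖ * ‖y‖ := (NormedSpace.exp (s • A)).le_opNorm y
        _ ≤ M * ‖y‖ := by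
          exact mul_le_mul_of_nonneg_right ((hs0 hsmem).trans (le_max_left _ _)) (norm_nonneg _)
    have hev : ∀ᶠ i in atTop, ‖x i‖ < r / M := by
      have := Metric.tendsto_nhds.mp hxlim (r / M) (div_pos hr hM0)
      filter_upwards [this] with i hi
      simpa [dist_zero_right] using hi
    filter_upwards [hev] with i hi
    have hball : ∀ s ∈ Set.Icc (-T) T,
        NormedSpace.exp (s • A) (x i) ∈ Metric.closedBall (0 : EuclideanSpace ℝ (Fin d)) r := by
      intro s hsmem
      rw [Metric.mem_closedBall, dist_zero_right]
      calc ‖NormedSpace.exp (s • A) (x i)‖ ≤ M * ‖x i‖ := hMb s hsmem _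
        _ ≤ M * (r / M) := mul_le_mul_of_nonneg_left hi.le hM0.le
        _ = r := by field_simp
    constructor
    · rw [htm i]
      refine le_csSup (hbddm i) ⟨hT, fun s hsIcc => ?_⟩
      exact hball (-s) ⟨by linarith [hsIcc.2], by linarith [hsIcc.1]⟩
    · rw [htp i]
      refine le_csSup (hbddp i) ⟨hT, fun s hsIcc => ?_⟩
      exact hball s ⟨by linarith [hsIcc.1], hsIcc.2⟩
  have first : Tendsto (fun i => tm i + tp i) atTop atTop := by
    rw [tendsto_atTop]
    intro T
    have hT1 : (0:ℝ) < max T 1 := lt_of_lt_of_le one_pos (le_max_right _ _)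
    filter_upwards [key (max T 1) hT1] with i ⟨h1, h2⟩
    have := le_max_left T 1
    linarith
  refine ⟨first, ?_⟩
  -- Part 2
  classical
  set v : ℕ → EuclideanSpace ℝ (Fin d) :=
    fun i => (Es.orthogonalProjectionOnto (x i) : EuclideanSpace ℝ (Fin d)) with hvdef
  set w : ℕ → EuclideanSpace ℝ (Fin d) :=
    fun i => (Esᗮ.orthogonalProjectionOnto (x i) : EuclideanSpace ℝ (Fin d)) with hwdef
  have hvw : ∀ i, v i + w i = x i := fun i =>
    Es.starProjection_add_starProjection_orthogonal (x i)
  have hvmem : ∀ i, v i ∈ Es := fun i => SetLike.coe_mem _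
  have hwmem : ∀ i, w i ∈ Esᗮ := fun i => SetLike.coe_mem _
  have hSinv : ∀ t : ℝ, ∀ y ∈ Es, NormedSpace.exp (t • A) y ∈ Es := fun t =>
    exp_mem_of_inv Es Es.closed_of_finiteDimensional (t • A)
      (fun y hy => by simpa using Es.smul_mem t (hinvs y hy))
  have hUinv : ∀ t : ℝ, ∀ y ∈ Esᗮ, NormedSpace.exp (t • A) y ∈ Esᗮ := fun t =>
    exp_mem_of_inv Esᗮ Esᗮ.closed_of_finiteDimensional (t • A)
      (fun y hy => by simpa using Esᗮ.smul_mem t (hinvu y hy))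
  set F : ℕ → ℝ → ℝ := fun i t => ‖NormedSpace.exp (t • A) (v i)‖ with hFdef
  set G : ℕ → ℝ → ℝ := fun i t => ‖NormedSpace.exp (t • A) (w i)‖ with hGdef
  have hsplit : ∀ i (t : ℝ),
      NormedSpace.exp (t • A) (x i) = NormedSpace.exp (t • A) (v i) + NormedSpace.exp (t • A) (w i) := by
    intro i t; rw [← map_add, hvw]
  have hprojS : ∀ i (t : ℝ), projComp Es (NormedSpace.exp (t • A) (x i)) = F i t := by
    intro i t
    have h1 : (Es.orthogonalProjectionOnto (NormedSpace.exp (t • A) (v i)) : EuclideanSpace ℝ (Fin d))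
        = NormedSpace.exp (t • A) (v i) := Submodule.starProjection_eq_self_iff.mpr (hSinv t _ (hvmem i))
    have h2 : Es.orthogonalProjectionOnto (NormedSpace.exp (t • A) (w i)) = 0 :=
      Submodule.orthogonalProjectionOnto_apply_of_mem_orthogonal (hUinv t _ (hwmem i))
    rw [projComp, hsplit i t, map_add, Submodule.coe_add, h1, h2, ZeroMemClass.coe_zero,
      add_zero]
  have hprojU : ∀ i (t : ℝ), projComp Esᗮ (NormedSpace.exp (t • A) (x i)) = G i t := by
    intro i t
    have h1 : (Esᗮ.orthogonalProjectionOnto (NormedSpace.exp (t • A) (w i)) : EuclideanSpace ℝ (Fin d))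
        = NormedSpace.exp (t • A) (w i) := Submodule.starProjection_eq_self_iff.mpr (hUinv t _ (hwmem i))
    have h2 : Esᗮ.orthogonalProjectionOnto (NormedSpace.exp (t • A) (v i)) = 0 :=
      Submodule.orthogonalProjectionOnto_apply_of_mem_orthogonal
        (Es.le_orthogonal_orthogonal (hSinv t _ (hvmem i)))
    rw [projComp, hsplit i t, map_add, Submodule.coe_add, h1, h2, ZeroMemClass.coe_zero,
      zero_add]
  have hFdec : ∀ i (s t : ℝ), s ≤ t → F i t ≤ C * Real.exp (a * (t - s)) * F i s := by
    intro i s t hst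
    have h1 : NormedSpace.exp (t • A) (v i) = NormedSpace.exp ((t - s) • A) (NormedSpace.exp (s • A) (v i)) := by
      rw [← exp_add_apply, sub_add_cancel]
    show ‖NormedSpace.exp (t • A) (v i)‖ ≤ _
    rw [h1]
    exact hs _ (hSinv s _ (hvmem i)) (t - s) (by linarith)
  have hGgrow : ∀ i (s t : ℝ), s ≤ t → C⁻¹ * Real.exp (b * (t - s)) * G i s ≤ G i t := by
    intro i s t hst
    have h1 : NormedSpace.exp (t • A) (w i) = NormedSpace.exp ((t - s) • A) (NormedSpace.exp (s • A) (w i)) := by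
      rw [← exp_add_apply, sub_add_cancel]
    show _ ≤ ‖NormedSpace.exp (t • A) (w i)‖
    rw [h1]
    exact hu _ (hUinv s _ (hwmem i)) (t - s) (by linarith)
  set Bad : ℕ → ℝ → Prop := fun i t => α * F i t ≤ G i t ∧ α * G i t ≤ F i t with hBadDef
  have hGpos : ∀ i (t : ℝ), Bad i t → 0 < G i t := by
    intro i t hbad
    obtain ⟨h1, h2⟩ := hbad
    rcases lt_or_eq_of_le (norm_nonneg (NormedSpace.exp (t • A) (w i))) with h | h
    · exact h
    · exfalso
      have hG0 : G i t = 0 := h.symm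
      have hFnn : 0 ≤ F i t := norm_nonneg _
      have hF0 : F i t = 0 := by nlinarith
      have hxz : NormedSpace.exp (t • A) (x i) = 0 := by
        rw [hsplit i t, norm_eq_zero.mp hF0, norm_eq_zero.mp hG0, add_zero]
      exact hx0 i (by rw [← exp_neg_cancel A t (x i), hxz, map_zero])
  set L : ℝ := Real.log (C ^ 2 / α ^ 2) / (b - a) with hLdef
  have hba : (0:ℝ) < b - a := by linarith
  have hCα : (1:ℝ) ≤ C ^ 2 / α ^ 2 := by
    rw [le_div_iff₀ (by positivity)]
    nlinarith
  have hL0 : 0 ≤ L := div_nonneg (Real.log_nonneg hCα) hba.le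
  have hsep : ∀ i (t1 t2 : ℝ), Bad i t1 → Bad i t2 → t1 ≤ t2 → t2 - t1 ≤ L := by
    intro i t1 t2 hb1 hb2 h12
    have hG1 : 0 < G i t1 := hGpos i t1 hb1
    have e1 := hGgrow i t1 t2 h12
    have e2 := hFdec i t1 t2 h12
    have e3 := hb2.2
    have e4 := hb1.1
    have hea : 0 < Real.exp (a * (t2 - t1)) := Real.exp_pos _
    have heb : 0 < Real.exp (b * (t2 - t1)) := Real.exp_pos _
    have chain : α * (α * (C⁻¹ * Real.exp (b * (t2 - t1)) * G i t1))
        ≤ C * Real.exp (a * (t2 - t1)) * G i t1 := by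
      calc α * (α * (C⁻¹ * Real.exp (b * (t2 - t1)) * G i t1))
          ≤ α * (α * G i t2) :=
            mul_le_mul_of_nonneg_left (mul_le_mul_of_nonneg_left e1 hα0.le) hα0.le
        _ ≤ α * F i t2 := mul_le_mul_of_nonneg_left e3 hα0.le
        _ ≤ α * (C * Real.exp (a * (t2 - t1)) * F i t1) := mul_le_mul_of_nonneg_left e2 hα0.le
        _ = C * Real.exp (a * (t2 - t1)) * (α * F i t1) := by ring
        _ ≤ C * Real.exp (a * (t2 - t1)) * G i t1 :=
            mul_le_mul_of_nonneg_left e4 (by positivity)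
    have key : α ^ 2 * (C⁻¹ * Real.exp (b * (t2 - t1))) ≤ C * Real.exp (a * (t2 - t1)) := by
      nlinarith [chain, hG1]
    have h5 : Real.exp (b * (t2 - t1))
        = Real.exp ((b - a) * (t2 - t1)) * Real.exp (a * (t2 - t1)) := by
      rw [← Real.exp_add]; ring_nf
    have k2 : α ^ 2 * C⁻¹ * Real.exp ((b - a) * (t2 - t1)) ≤ C := by
      rw [h5] at key
      nlinarith [key, hea]
    have k3 : Real.exp ((b - a) * (t2 - t1)) ≤ C ^ 2 / α ^ 2 := by
      rw [le_div_iff₀ (by positivity)]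
      have hcc : C⁻¹ * C = 1 := inv_mul_cancel₀ (ne_of_gt hC0)
      nlinarith [mul_le_mul_of_nonneg_right k2 hC0.le, Real.exp_pos ((b - a) * (t2 - t1))]
    have k4 : (b - a) * (t2 - t1) ≤ Real.log (C ^ 2 / α ^ 2) :=
      (Real.le_log_iff_exp_le (by positivity)).mpr k3
    rw [hLdef, le_div_iff₀ hba]
    linarith
  -- rewrite the goal in terms of F and G
  simp only [hprojS, hprojU]
  have hupper : ∀ i, volume {t : ℝ | t ∈ Set.Ioo (-(tm i)) (tp i) ∧
      (G i t < α * F i t ∨ F i t < α * G i t)} ≤ ENNReal.ofReal (tm i + tp i) := by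
    intro i
    calc volume {t : ℝ | t ∈ Set.Ioo (-(tm i)) (tp i) ∧
          (G i t < α * F i t ∨ F i t < α * G i t)}
        ≤ volume (Set.Ioo (-(tm i)) (tp i)) := measure_mono fun t ht => ht.1
      _ = ENNReal.ofReal (tm i + tp i) := by rw [Real.volume_Ioo]; ring_nf
  have hlow : ∀ i, ENNReal.ofReal (tm i + tp i) ≤
      volume {t : ℝ | t ∈ Set.Ioo (-(tm i)) (tp i) ∧
        (G i t < α * F i t ∨ F i t < α * G i t)} + ENNReal.ofReal (2 * L) := by
    intro i
    by_cases hB : ∃ c, Bad i c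
    · obtain ⟨c, hc⟩ := hB
      have hsub : Set.Ioo (-(tm i)) (tp i) ⊆
          {t : ℝ | t ∈ Set.Ioo (-(tm i)) (tp i) ∧
            (G i t < α * F i t ∨ F i t < α * G i t)} ∪ Set.Icc (c - L) (c + L) := by
        intro t ht
        by_cases hbt : Bad i t
        · right
          rcases le_total t c with h | h
          · exact ⟨by linarith [hsep i t c hbt hc h], by linarith⟩
          · exact ⟨by linarith, by linarith [hsep i c t hc hbt h]⟩
        · left
          refine ⟨ht, ?_⟩
          rw [hBadDef] at hbt
          simp only [not_and_or, not_le] at hbt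
          exact hbt
      calc ENNReal.ofReal (tm i + tp i) = volume (Set.Ioo (-(tm i)) (tp i)) := by
            rw [Real.volume_Ioo]; ring_nf
        _ ≤ volume ({t : ℝ | t ∈ Set.Ioo (-(tm i)) (tp i) ∧
              (G i t < α * F i t ∨ F i t < α * G i t)} ∪ Set.Icc (c - L) (c + L)) :=
            measure_mono hsub
        _ ≤ volume {t : ℝ | t ∈ Set.Ioo (-(tm i)) (tp i) ∧
              (G i t < α * F i t ∨ F i t < α * G i t)} + volume (Set.Icc (c - L) (c + L)) :=
            measure_union_le _ _
        _ = volume {t : ℝ | t ∈ Set.Ioo (-(tm i)) (tp i) ∧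
              (G i t < α * F i t ∨ F i t < α * G i t)} + ENNReal.ofReal (2 * L) := by
            rw [Real.volume_Icc]; ring_nf
    · push_neg at hB
      have hsub : Set.Ioo (-(tm i)) (tp i) ⊆
          {t : ℝ | t ∈ Set.Ioo (-(tm i)) (tp i) ∧
            (G i t < α * F i t ∨ F i t < α * G i t)} := by
        intro t ht
        refine ⟨ht, ?_⟩
        have hbt := hB t
        rw [hBadDef] at hbt
        simp only [not_and_or, not_le] at hbt
        exact hbt
      calc ENNReal.ofReal (tm i + tp i) = volume (Set.Ioo (-(tm i)) (tp i)) := by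
            rw [Real.volume_Ioo]; ring_nf
        _ ≤ volume {t : ℝ | t ∈ Set.Ioo (-(tm i)) (tp i) ∧
              (G i t < α * F i t ∨ F i t < α * G i t)} := measure_mono hsub
        _ ≤ _ := le_self_add
  -- squeeze
  have hlimlo : Tendsto (fun i => 1 - 2 * L / (tm i + tp i)) atTop (nhds 1) := by
    have h0 : Tendsto (fun i => 2 * L / (tm i + tp i)) atTop (nhds 0) :=
      Tendsto.div_atTop tendsto_const_nhds first
    simpa using (tendsto_const_nhds (α := ℕ) (x := (1:ℝ))).sub h0
  refine tendsto_of_tendsto_of_tendsto_of_le_of_le' hlimlo tendsto_const_nhds ?_ ?_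
  · filter_upwards [key 1 one_pos] with i hi
    obtain ⟨h1, h2⟩ := hi
    have hpos : (0:ℝ) < tm i + tp i := by linarith
    have hne : volume {t : ℝ | t ∈ Set.Ioo (-(tm i)) (tp i) ∧
        (G i t < α * F i t ∨ F i t < α * G i t)} ≠ ⊤ :=
      ((hupper i).trans_lt ENNReal.ofReal_lt_top).ne
    have hto := ENNReal.toReal_mono
      (ENNReal.add_ne_top.mpr ⟨hne, ENNReal.ofReal_ne_top⟩) (hlow i)
    rw [ENNReal.toReal_add hne ENNReal.ofReal_ne_top, ENNReal.toReal_ofReal hpos.le,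
      ENNReal.toReal_ofReal (by positivity)] at hto
    have heq : 1 - 2 * L / (tm i + tp i) = (tm i + tp i - 2 * L) / (tm i + tp i) := by
      field_simp
    rw [heq]
    exact (div_le_div_iff_of_pos_right hpos).mpr (by linarith)
  · filter_upwards [key 1 one_pos] with i hi
    obtain ⟨h1, h2⟩ := hi
    have hpos : (0:ℝ) < tm i + tp i := by linarith
    have hto : (volume {t : ℝ | t ∈ Set.Ioo (-(tm i)) (tp i) ∧
        (G i t < α * F i t ∨ F i t < α * G i t)}).toReal ≤ tm i + tp i :=
      ENNReal.toReal_le_of_le_ofReal hpos.le (hupper i)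
    exact (div_le_one hpos).mpr hto
end

section
/- For each r > 0 there exist a ∈ (0, 1/2) and α₀ > 0, independent of α and of the sequence, such that for every α ∈ (0, α₀) and every sequence x_i ∈ E ∖ {0} with x_i → 0 whose entry and exit times t_i⁻ = sup{t > 0 : exp(−sA)x_i ∈ closedBall(0,r) for all s ∈ [0,t]} and t_i⁺ = sup{t > 0 : exp(sA)x_i ∈ closedBall(0,r) for all s ∈ [0,t]} are finite, one has for all sufficiently large i: Leb{t ∈ (−t_i⁻, t_i⁺) : exp(tA)x_i ∈ Dˢ_α} > a·(t_i⁻ + t_i⁺) and Leb{t ∈ (−t_i⁻, t_i⁺) : exp(tA)x_i ∈ Dᵘ_α} > a·(t_i⁻ + t_i⁺). (The times that orbit segments passing near a hyperbolic singularity spend in the stable cone and in the unstable cone are comparable, each occupying a uniformly positive fraction of the total time.) -/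
set_option synthInstance.maxHeartbeats 1000000
set_option maxHeartbeats 1000000

open NormedSpace MeasureTheory Filter

section helpers
variable {d : ℕ}
local notation "E" => EuclideanSpace ℝ (Fin d)

lemma norm_exp_apply_le (B : E →L[ℝ] E) (y : E) :
    ‖exp B y‖ ≤ Real.exp ‖B‖ * ‖y‖ := by
  have h1 : ‖exp B‖ ≤ Real.exp ‖B‖ := by
    rw [exp_eq_tsum (𝕂 := ℝ)]
    refine le_trans (norm_tsum_le_tsum_norm (norm_expSeries_summable' B)) ?_
    have h2 : Real.exp ‖B‖ = ∑' n : ℕ, ((n.factorial : ℝ)⁻¹ • ‖B‖ ^ n) := by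
      rw [Real.exp_eq_exp_ℝ, exp_eq_tsum (𝕂 := ℝ)]
    rw [h2]
    refine Summable.tsum_le_tsum ?_ (norm_expSeries_summable' B) (expSeries_summable' (𝕂 := ℝ) ‖B‖)
    intro n
    rw [norm_smul, norm_inv, Real.norm_natCast, smul_eq_mul]
    gcongr
    rcases Nat.eq_zero_or_pos n with h | h
    · subst h
      rw [pow_zero, pow_zero, ContinuousLinearMap.one_def]
      exact ContinuousLinearMap.norm_id_le
    · exact norm_pow_le' B h
  calc ‖exp B y‖ ≤ ‖exp B‖ * ‖y‖ := (exp B).le_opNorm y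
    _ ≤ Real.exp ‖B‖ * ‖y‖ := mul_le_mul_of_nonneg_right h1 (norm_nonneg y)

lemma exp_smul_add (A : E →L[ℝ] E) (s t : ℝ) (y : E) :
    exp ((s + t) • A) y = exp (s • A) (exp (t • A) y) := by
  have hc : Commute (s • A) (t • A) := by
    refine ContinuousLinearMap.ext fun z => ?_
    simp only [ContinuousLinearMap.mul_apply, ContinuousLinearMap.smul_apply,
      _root_.map_smul, smul_smul, mul_comm]
  have h : (s + t) • A = s • A + t • A := add_smul s t A
  rw [h, exp_add_of_commute_of_mem_ball (𝕂 := ℝ) hc ((expSeries_radius_eq_top ℝ (E →L[ℝ] E)).symm ▸ edist_lt_top _ _)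
    ((expSeries_radius_eq_top ℝ (E →L[ℝ] E)).symm ▸ edist_lt_top _ _), ContinuousLinearMap.mul_apply]

lemma exp_mem_of_mem (B : E →L[ℝ] E) (K : Submodule ℝ E) (hK : ∀ v ∈ K, B v ∈ K)
    {v : E} (hv : v ∈ K) : exp B v ∈ K := by
  have hpow : ∀ n : ℕ, ∀ v ∈ K, (B ^ n) v ∈ K := by
    intro n
    induction n with
    | zero => intro v hv; simpa using hv
    | succ n ih =>
        intro v hv
        rw [pow_succ, ContinuousLinearMap.mul_apply]
        exact ih _ (hK v hv)
  have hsum : HasSum (fun n : ℕ => ((n.factorial : ℝ)⁻¹ • B ^ n) v) (exp B v) := by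
    have h := exp_series_hasSum_exp' (𝕂 := ℝ) B
    exact h.mapL (ContinuousLinearMap.apply ℝ E v)
  have hcl : IsClosed (K : Set E) := Submodule.closed_of_finiteDimensional K
  refine hcl.mem_of_tendsto hsum.tendsto_sum_nat (Filter.Eventually.of_forall ?_)
  intro n
  exact Submodule.sum_mem K fun j _ => by
    rw [ContinuousLinearMap.smul_apply]
    exact K.smul_mem _ (hpow j v hv)

/-- If the orbit starts strictly inside the ball and the sojourn-time set is bounded above,
then the orbit stays in the ball up to the supremum time, and hits the sphere there. -/
lemma exit_time_facts (F : ℝ → E) (hF : Continuous F) (r : ℝ) (hr : 0 < r)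
    (h0 : ‖F 0‖ < r)
    (hbdd : BddAbove {t : ℝ | 0 < t ∧ ∀ s ∈ Set.Icc (0 : ℝ) t, F s ∈ Metric.closedBall 0 r}) :
    (∀ t, (0 < t ∧ ∀ s ∈ Set.Icc (0 : ℝ) t, F s ∈ Metric.closedBall 0 r) →
      t ≤ sSup {t : ℝ | 0 < t ∧ ∀ s ∈ Set.Icc (0 : ℝ) t, F s ∈ Metric.closedBall 0 r}) ∧
    (∀ s ∈ Set.Icc (0 : ℝ)
      (sSup {t : ℝ | 0 < t ∧ ∀ s ∈ Set.Icc (0 : ℝ) t, F s ∈ Metric.closedBall 0 r}),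
      ‖F s‖ ≤ r) ∧
    ‖F (sSup {t : ℝ | 0 < t ∧ ∀ s ∈ Set.Icc (0 : ℝ) t, F s ∈ Metric.closedBall 0 r})‖ = r := by
  set S := {t : ℝ | 0 < t ∧ ∀ s ∈ Set.Icc (0 : ℝ) t, F s ∈ Metric.closedBall 0 r} with hS
  have hcont0 : ∃ δ > 0, ∀ s : ℝ, dist s 0 < δ → dist (F s) (F 0) < r - ‖F 0‖ :=
    Metric.continuous_iff.mp hF 0 (r - ‖F 0‖) (by linarith)
  obtain ⟨δ, hδ, hδ'⟩ := hcont0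
  have hne : (δ / 2) ∈ S := by
    refine ⟨by linarith, fun s hs => ?_⟩
    rw [Metric.mem_closedBall, dist_zero_right]
    have h1 : dist (F s) (F 0) < r - ‖F 0‖ := by
      apply hδ'
      rw [Real.dist_eq, sub_zero, abs_of_nonneg hs.1]
      linarith [hs.2]
    calc ‖F s‖ = dist (F s) 0 := (dist_zero_right _).symm
      _ ≤ dist (F s) (F 0) + dist (F 0) 0 := dist_triangle _ _ _
      _ ≤ r := by rw [dist_zero_right]; linarith
  have hSne : S.Nonempty := ⟨_, hne⟩
  set T := sSup S with hT
  have hTpos : 0 < T := lt_of_lt_of_le (by linarith) (le_csSup hbdd hne)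
  have hIco : Set.Ico (0:ℝ) T ⊆ {s : ℝ | F s ∈ Metric.closedBall 0 r} := by
    rintro s ⟨hs0, hsT⟩
    obtain ⟨t, htS, hst⟩ := exists_lt_of_lt_csSup hSne hsT
    exact htS.2 s ⟨hs0, hst.le⟩
  have hclosed : IsClosed {s : ℝ | F s ∈ Metric.closedBall 0 r} :=
    IsClosed.preimage hF Metric.isClosed_closedBall
  have hIcc : Set.Icc (0:ℝ) T ⊆ {s : ℝ | F s ∈ Metric.closedBall 0 r} := by
    have h1 : closure (Set.Ico (0:ℝ) T) = Set.Icc (0:ℝ) T := closure_Ico (ne_of_lt hTpos)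
    rw [← h1]
    exact closure_minimal hIco hclosed
  have hball : ∀ s ∈ Set.Icc (0:ℝ) T, ‖F s‖ ≤ r := by
    intro s hs
    have := hIcc hs
    rwa [Set.mem_setOf_eq, Metric.mem_closedBall, dist_zero_right] at this
  refine ⟨fun t ht => le_csSup hbdd ht, hball, ?_⟩
  by_contra hne'
  have hlt : ‖F T‖ < r := lt_of_le_of_ne (hball T ⟨hTpos.le, le_refl T⟩) hne'
  obtain ⟨δ', hδ'pos, hδ''⟩ := Metric.continuous_iff.mp hF T (r - ‖F T‖) (by linarith)
  have hmem : T + δ' / 2 ∈ S := by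
    refine ⟨by linarith, fun s hs => ?_⟩
    rcases le_or_gt s T with h | h
    · exact hIcc ⟨hs.1, h⟩
    · rw [Metric.mem_closedBall, dist_zero_right]
      have h1 : dist (F s) (F T) < r - ‖F T‖ := by
        apply hδ''
        rw [Real.dist_eq, abs_of_nonneg (by linarith)]
        linarith [hs.2]
      calc ‖F s‖ = dist (F s) 0 := (dist_zero_right _).symm
        _ ≤ dist (F s) (F T) + dist (F T) 0 := dist_triangle _ _ _
        _ ≤ r := by rw [dist_zero_right]; linarith
  have := le_csSup hbdd hmem
  linarith

lemma projComp_add_left (K : Submodule ℝ E) (a b : E) (ha : a ∈ K) (hb : b ∈ Kᗮ) :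
    projComp K (a + b) = ‖a‖ := by
  unfold projComp
  rw [map_add]
  have h1 : (K.orthogonalProjectionOnto a : E) = a := Submodule.starProjection_eq_self_iff.mpr ha
  have h2 : K.orthogonalProjectionOnto b = 0 :=
    Submodule.orthogonalProjectionOnto_apply_of_mem_orthogonal hb
  rw [Submodule.coe_add, h1, h2]
  simp

lemma projComp_add_right (K : Submodule ℝ E) (a b : E) (ha : a ∈ K) (hb : b ∈ Kᗮ) :
    projComp Kᗮ (a + b) = ‖b‖ := by
  unfold projComp
  rw [map_add]
  have h1 : (Kᗮ.orthogonalProjectionOnto b : E) = b := Submodule.starProjection_eq_self_iff.mpr hb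
  have h2 : Kᗮ.orthogonalProjectionOnto a = 0 :=
    Submodule.orthogonalProjectionOnto_apply_of_mem_orthogonal
      (K.le_orthogonal_orthogonal ha)
  rw [Submodule.coe_add, h1, h2]
  simp

lemma projComp_pythagoras (K : Submodule ℝ E) (y : E) :
    projComp K y ^ 2 + projComp Kᗮ y ^ 2 = ‖y‖ ^ 2 := by
  have := Submodule.norm_sq_eq_add_norm_sq_projection y K
  unfold projComp
  simp only [Submodule.norm_coe] at this ⊢
  linarith

lemma aux_pyth_le (f g r : ℝ) (hr : 0 ≤ r) (hf : 0 ≤ f) (hg : 0 ≤ g)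
    (h : f ^ 2 + g ^ 2 = r ^ 2) : f ≤ r := by nlinarith

lemma aux_pyth_big (f g r : ℝ) (hr : 0 ≤ r) (hf : 0 ≤ f) (hg0 : 0 ≤ g) (hg : g ≤ r / 2)
    (h : f ^ 2 + g ^ 2 = r ^ 2) : r / 2 ≤ f := by nlinarith

lemma aux_le_inv_mul (P q f g : ℝ) (hP : 0 < P) (hq : q ≤ f) (h : f ≤ P * g) :
    P⁻¹ * q ≤ g := by
  have h1 : q ≤ P * g := le_trans hq h
  calc P⁻¹ * q ≤ P⁻¹ * (P * g) := by
        apply mul_le_mul_of_nonneg_left h1 (by positivity)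
    _ = g := by field_simp

end helpers

/-- Linear-model form of Lemma 3.4: the times that orbit segments of a hyperbolic linear
flow passing near the singularity spend in the stable cone `Dˢ_α` and in the unstable
cone `Dᵘ_α` are comparable: there are `a ∈ (0, 1/2)` and `α₀ > 0`, independent of `α` and
of the sequence, such that each cone occupies at least the fraction `a` of the total
crossing time `t_i⁻ + t_i⁺`, for all sufficiently large `i`. -/
theorem time_in_cones_comparable {d : ℕ}
    (A : EuclideanSpace ℝ (Fin d) →L[ℝ] EuclideanSpace ℝ (Fin d))
    (hA : Function.Bijective A)
    (Es : Submodule ℝ (EuclideanSpace ℝ (Fin d)))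
    (C c₁ c₂ : ℝ) (hC : 1 ≤ C) (hc₁ : c₁ < 0) (hc₂ : 0 < c₂)
    (hinvs : ∀ v ∈ Es, A v ∈ Es) (hinvu : ∀ v ∈ Esᗮ, A v ∈ Esᗮ)
    (hs : ∀ v ∈ Es, ∀ t : ℝ, 0 ≤ t → ‖exp (t • A) v‖ ≤ C * Real.exp (c₁ * t) * ‖v‖)
    (hu : ∀ v ∈ Esᗮ, ∀ t : ℝ, 0 ≤ t →
      C⁻¹ * Real.exp (c₂ * t) * ‖v‖ ≤ ‖exp (t • A) v‖)
    (r : ℝ) (hr : 0 < r) :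
    ∃ a : ℝ, a ∈ Set.Ioo (0 : ℝ) (1/2) ∧ ∃ α₀ : ℝ, 0 < α₀ ∧
      ∀ α : ℝ, α ∈ Set.Ioo (0 : ℝ) α₀ →
      ∀ x : ℕ → EuclideanSpace ℝ (Fin d), (∀ i, x i ≠ 0) →
      Tendsto x atTop (nhds 0) →
      ∀ tm tp : ℕ → ℝ,
      (∀ i, tm i = sSup {t : ℝ | 0 < t ∧ ∀ s ∈ Set.Icc (0 : ℝ) t,
        exp ((-s) • A) (x i) ∈ Metric.closedBall (0 : EuclideanSpace ℝ (Fin d)) r}) →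
      (∀ i, tp i = sSup {t : ℝ | 0 < t ∧ ∀ s ∈ Set.Icc (0 : ℝ) t,
        exp (s • A) (x i) ∈ Metric.closedBall (0 : EuclideanSpace ℝ (Fin d)) r}) →
      (∀ i, BddAbove {t : ℝ | 0 < t ∧ ∀ s ∈ Set.Icc (0 : ℝ) t,
        exp ((-s) • A) (x i) ∈ Metric.closedBall (0 : EuclideanSpace ℝ (Fin d)) r}) →
      (∀ i, BddAbove {t : ℝ | 0 < t ∧ ∀ s ∈ Set.Icc (0 : ℝ) t,
        exp (s • A) (x i) ∈ Metric.closedBall (0 : EuclideanSpace ℝ (Fin d)) r}) →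
      ∃ N : ℕ, ∀ i ≥ N,
        a * (tm i + tp i) <
          (volume {t : ℝ | t ∈ Set.Ioo (-(tm i)) (tp i) ∧
            projComp Esᗮ (exp (t • A) (x i)) <
              α * projComp Es (exp (t • A) (x i))}).toReal ∧
        a * (tm i + tp i) <
          (volume {t : ℝ | t ∈ Set.Ioo (-(tm i)) (tp i) ∧
            projComp Es (exp (t • A) (x i)) <
              α * projComp Esᗮ (exp (t • A) (x i))}).toReal := by
  have hC0 : (0:ℝ) < C := lt_of_lt_of_le one_pos hC
  set M : ℝ := ‖A‖ + 1 with hMdef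
  have hMpos : 0 < M := by positivity
  have hMA : ‖A‖ ≤ M := by simp [hMdef]
  have hrat1 : 0 < c₂ / (M + c₂) := by positivity
  have hrat2 : 0 < (-c₁) / (M - c₁) := by
    apply div_pos (by linarith) (by linarith)
  have hrat1lt : c₂ / (M + c₂) < 1 := by
    rw [div_lt_one (by linarith)]; linarith
  set a : ℝ := min (c₂ / (M + c₂)) ((-c₁) / (M - c₁)) / 4 with hadef
  have hapos : 0 < a := by
    apply div_pos (lt_min hrat1 hrat2) (by norm_num)
  have hmin1 := min_le_left (c₂ / (M + c₂)) ((-c₁) / (M - c₁))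
  have hmin2 := min_le_right (c₂ / (M + c₂)) ((-c₁) / (M - c₁))
  have haa1 : a < c₂ / (M + c₂) := by rw [hadef]; linarith
  have haa2 : a < (-c₁) / (M - c₁) := by rw [hadef]; linarith
  have ha1 : a * (M + c₂) < c₂ := (lt_div_iff₀ (by linarith)).mp haa1
  have ha2 : a * (M - c₁) < -c₁ := (lt_div_iff₀ (by linarith)).mp haa2
  refine ⟨a, ⟨hapos, by rw [hadef]; linarith⟩, 1, one_pos, ?_⟩
  intro α hα x hxne hxlim tm tp htm htp hbm hbp
  obtain ⟨hα0, hα1⟩ := hα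
  -- constants depending on α
  set K : ℝ := Real.log (α / (2 * C)) with hKdef
  have hKval : K = Real.log α - Real.log 2 - Real.log C := by
    rw [hKdef, Real.log_div (ne_of_gt hα0) (by positivity),
      Real.log_mul (by norm_num) (ne_of_gt hC0)]
    ring
  have hKneg : K < 0 := by
    apply Real.log_neg (by positivity)
    rw [div_lt_one (by positivity)]
    linarith
  set β₁ : ℝ := c₂ - a * (M + c₂) with hβ₁def
  set β₂ : ℝ := (-c₁) - a * (M - c₁) with hβ₂def
  have hβ₁ : 0 < β₁ := by rw [hβ₁def]; linarith
  have hβ₂ : 0 < β₂ := by rw [hβ₂def]; linarith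
  set Tst : ℝ := max 0 (max (max (Real.log (2*C) / c₂) (Real.log (2*C) / (-c₁)))
    (max ((-K)/β₁) ((-K)/β₂))) with hTstdef
  have hTst0 : (0:ℝ) ≤ Tst := le_max_left _ _
  have hTst1 : Real.log (2*C) / c₂ ≤ Tst :=
    le_trans (le_trans (le_max_left _ _) (le_max_left _ _)) (le_max_right _ _)
  have hTst2 : Real.log (2*C) / (-c₁) ≤ Tst :=
    le_trans (le_trans (le_max_right _ _) (le_max_left _ _)) (le_max_right _ _)
  have hTst3 : (-K)/β₁ ≤ Tst :=
    le_trans (le_trans (le_max_left _ _) (le_max_right _ _)) (le_max_right _ _)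
  have hTst4 : (-K)/β₂ ≤ Tst :=
    le_trans (le_trans (le_max_right _ _) (le_max_right _ _)) (le_max_right _ _)
  set ε : ℝ := r * Real.exp (-(M * (Tst + 1))) with hεdef
  have hεpos : 0 < ε := by positivity
  have hεr : ε ≤ r := by
    have h1 : Real.exp (-(M * (Tst + 1))) ≤ 1 :=
      Real.exp_le_one_iff.mpr (neg_nonpos.mpr (by positivity))
    calc ε = r * Real.exp (-(M * (Tst + 1))) := hεdef
      _ ≤ r * 1 := mul_le_mul_of_nonneg_left h1 hr.le
      _ = r := mul_one r
  have hev : ∀ᶠ i in atTop, ‖x i‖ < ε := by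
    have h1 := Metric.tendsto_nhds.mp hxlim ε hεpos
    filter_upwards [h1] with i hi
    rwa [dist_zero_right] at hi
  rw [eventually_atTop] at hev
  obtain ⟨N, hN⟩ := hev
  refine ⟨N, fun i hi => ?_⟩
  have hxi : ‖x i‖ < ε := hN i hi
  have hxir : ‖x i‖ < r := lt_of_lt_of_le hxi hεr
  -- continuity of the flow
  have hcont : ∀ y : EuclideanSpace ℝ (Fin d), Continuous fun s : ℝ => exp (s • A) y := by
    intro y
    have h1 : Continuous fun s : ℝ => exp (s • A) :=
      (continuous_iff_continuousAt.mpr fun z => (exp_analytic (𝕂 := ℝ) z).continuousAt).comp (continuous_id.smul continuous_const)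
    exact ((ContinuousLinearMap.apply ℝ (EuclideanSpace ℝ (Fin d)) y).continuous).comp h1
  have hcontm : Continuous fun s : ℝ => exp ((-s) • A) (x i) :=
    (hcont (x i)).comp continuous_neg
  have hzero : ∀ c : ℝ, c = 0 → exp (c • A) (x i) = x i := by
    intro c hc
    have h0 : (0:ℝ) • A = 0 := zero_smul ℝ A
    rw [hc, h0, exp_zero, ContinuousLinearMap.one_apply]
  obtain ⟨hlbm, hballm, hexitm⟩ :=
    exit_time_facts (fun s => exp ((-s) • A) (x i)) hcontm r hr
      (by show ‖exp ((-(0:ℝ)) • A) (x i)‖ < r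
          rw [hzero (-(0:ℝ)) (by norm_num)]; exact hxir) (hbm i)
  obtain ⟨hlbp, hballp, hexitp⟩ :=
    exit_time_facts (fun s => exp (s • A) (x i)) (hcont (x i)) r hr
      (by show ‖exp ((0:ℝ) • A) (x i)‖ < r
          rw [hzero (0:ℝ) rfl]; exact hxir) (hbp i)
  -- lower bounds on the entry and exit times
  have hbound : ∀ (c s : ℝ), |c| ≤ s → s ≤ Tst + 1 →
      exp (c • A) (x i) ∈ Metric.closedBall (0 : EuclideanSpace ℝ (Fin d)) r := by
    intro c s hcs hsT
    rw [Metric.mem_closedBall, dist_zero_right]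
    have h1 : ‖exp (c • A) (x i)‖ ≤ Real.exp ‖c • A‖ * ‖x i‖ := norm_exp_apply_le _ _
    have h2 : ‖c • A‖ ≤ M * (Tst + 1) := by
      have h2' : ‖c • A‖ = ‖c‖ * ‖A‖ := norm_smul c A
      rw [h2', Real.norm_eq_abs]
      have habs : |c| ≤ Tst + 1 := le_trans hcs hsT
      calc |c| * ‖A‖ ≤ (Tst + 1) * M := mul_le_mul habs hMA (norm_nonneg A) (by linarith)
        _ = M * (Tst + 1) := mul_comm _ _
    have h3 : Real.exp ‖c • A‖ ≤ Real.exp (M * (Tst + 1)) := Real.exp_le_exp.mpr h2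
    have h4 : Real.exp (M * (Tst + 1)) * ε = r := by
      rw [hεdef, mul_comm (Real.exp (M * (Tst + 1)))]
      rw [mul_assoc, ← Real.exp_add]
      simp
    calc ‖exp (c • A) (x i)‖ ≤ Real.exp ‖c • A‖ * ‖x i‖ := h1
      _ ≤ Real.exp (M * (Tst + 1)) * ‖x i‖ := mul_le_mul_of_nonneg_right h3 (norm_nonneg _)
      _ ≤ Real.exp (M * (Tst + 1)) * ε := mul_le_mul_of_nonneg_left hxi.le (Real.exp_pos _).le
      _ = r := h4
  have hTm : Tst + 1 ≤ tm i := by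
    rw [htm i]
    apply hlbm
    refine ⟨by linarith, fun s hs => ?_⟩
    exact hbound (-s) (Tst + 1) (by rw [abs_neg, abs_of_nonneg hs.1]; exact hs.2) le_rfl
  have hTp : Tst + 1 ≤ tp i := by
    rw [htp i]
    apply hlbp
    refine ⟨by linarith, fun s hs => ?_⟩
    exact hbound s (Tst + 1) (by rw [abs_of_nonneg hs.1]; exact hs.2) le_rfl
  have hTmpos : 0 < tm i := by linarith
  have hTppos : 0 < tp i := by linarith
  -- endpoint norms
  have hnm : ‖exp ((-(tm i)) • A) (x i)‖ = r := by rw [htm i]; exact hexitm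
  have hnp : ‖exp ((tp i) • A) (x i)‖ = r := by rw [htp i]; exact hexitp
  -- orthogonal decomposition
  set v : EuclideanSpace ℝ (Fin d) := (Es.orthogonalProjectionOnto (x i) : EuclideanSpace ℝ (Fin d))
    with hvdef
  set w : EuclideanSpace ℝ (Fin d) := (Esᗮ.orthogonalProjectionOnto (x i) : EuclideanSpace ℝ (Fin d))
    with hwdef
  have hvw : v + w = x i := Submodule.starProjection_add_starProjection_orthogonal (K := Es) (x i)
  have hv : v ∈ Es := Submodule.coe_mem _
  have hw : w ∈ Esᗮ := Submodule.coe_mem _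
  have hinv_s : ∀ t : ℝ, ∀ u ∈ Es, exp (t • A) u ∈ Es := by
    intro t u hu
    refine exp_mem_of_mem (t • A) Es (fun z hz => ?_) hu
    rw [ContinuousLinearMap.smul_apply]
    exact Es.smul_mem t (hinvs z hz)
  have hinv_u : ∀ t : ℝ, ∀ u ∈ Esᗮ, exp (t • A) u ∈ Esᗮ := by
    intro t u hu
    refine exp_mem_of_mem (t • A) Esᗮ (fun z hz => ?_) hu
    rw [ContinuousLinearMap.smul_apply]
    exact Esᗮ.smul_mem t (hinvu z hz)
  have hXsplit : ∀ t : ℝ, exp (t • A) (x i) = exp (t • A) v + exp (t • A) w := by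
    intro t
    rw [← map_add, hvw]
  have hfid : ∀ t : ℝ, projComp Es (exp (t • A) (x i)) = ‖exp (t • A) v‖ := by
    intro t
    rw [hXsplit t]
    exact projComp_add_left Es _ _ (hinv_s t v hv) (hinv_u t w hw)
  have hgid : ∀ t : ℝ, projComp Esᗮ (exp (t • A) (x i)) = ‖exp (t • A) w‖ := by
    intro t
    rw [hXsplit t]
    exact projComp_add_right Es _ _ (hinv_s t v hv) (hinv_u t w hw)
  -- pythagoras at both endpoints
  have hpm : ‖exp ((-(tm i)) • A) v‖ ^ 2 + ‖exp ((-(tm i)) • A) w‖ ^ 2 = r ^ 2 := by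
    rw [← hfid, ← hgid, projComp_pythagoras, hnm]
  have hpp : ‖exp ((tp i) • A) v‖ ^ 2 + ‖exp ((tp i) • A) w‖ ^ 2 = r ^ 2 := by
    rw [← hfid, ← hgid, projComp_pythagoras, hnp]
  -- the three basic dynamical estimates
  have hE1 : ∀ s t : ℝ, s ≤ t →
      ‖exp (t • A) v‖ ≤ C * Real.exp (c₁ * (t - s)) * ‖exp (s • A) v‖ := by
    intro s t hst
    have h1 : exp (t • A) v = exp ((t - s) • A) (exp (s • A) v) := by
      rw [← exp_smul_add A (t - s) s v, sub_add_cancel]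
    rw [h1]
    exact hs _ (hinv_s s v hv) (t - s) (by linarith)
  have hE2 : ∀ s t : ℝ, s ≤ t →
      ‖exp (s • A) w‖ ≤ C * Real.exp (-(c₂ * (t - s))) * ‖exp (t • A) w‖ := by
    intro s t hst
    have h1 : exp (t • A) w = exp ((t - s) • A) (exp (s • A) w) := by
      rw [← exp_smul_add A (t - s) s w, sub_add_cancel]
    have h2 := hu _ (hinv_u s w hw) (t - s) (by linarith)
    rw [← h1] at h2
    rw [Real.exp_neg]
    have hid : ‖exp (s • A) w‖ =
        C * (Real.exp (c₂ * (t - s)))⁻¹ * (C⁻¹ * Real.exp (c₂ * (t - s)) * ‖exp (s • A) w‖) := by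
      have hne : Real.exp (c₂ * (t - s)) ≠ 0 := (Real.exp_pos _).ne'
      have hCne : C ≠ 0 := ne_of_gt hC0
      field_simp
    rw [hid]
    exact mul_le_mul_of_nonneg_left h2 (by positivity)
  have hE3 : ∀ (u : ℝ) (y : EuclideanSpace ℝ (Fin d)),
      ‖y‖ ≤ Real.exp (|u| * M) * ‖exp (u • A) y‖ := by
    intro u y
    have h1 : exp ((-u) • A) (exp (u • A) y) = y := by
      have h0 : (0:ℝ) • A = 0 := zero_smul ℝ A
      rw [← exp_smul_add A (-u) u y, neg_add_cancel, h0, exp_zero,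
        ContinuousLinearMap.one_apply]
    have h2 : ‖exp ((-u) • A) (exp (u • A) y)‖ ≤
        Real.exp ‖(-u) • A‖ * ‖exp (u • A) y‖ := norm_exp_apply_le _ _
    rw [h1] at h2
    refine le_trans h2 (mul_le_mul_of_nonneg_right (Real.exp_le_exp.mpr ?_) (norm_nonneg _))
    have h3 : ‖(-u) • A‖ = ‖(-u)‖ * ‖A‖ := norm_smul (-u) A
    rw [h3, Real.norm_eq_abs, abs_neg]
    exact mul_le_mul_of_nonneg_left hMA (abs_nonneg u)
  -- shorthand
  obtain ⟨T, hTdef⟩ : ∃ T : ℝ, T = tm i + tp i := ⟨_, rfl⟩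
  have hTT : Tst < T := by rw [hTdef]; linarith
  have hTpos : 0 < T := by rw [hTdef]; linarith
  have hMT : 0 < M * T := mul_pos hMpos hTpos
  have hc₂T : Real.log (2*C) ≤ c₂ * T := by
    have := (div_le_iff₀ hc₂).mp (le_trans hTst1 hTT.le)
    linarith
  have hc₁T : Real.log (2*C) ≤ (-c₁) * T := by
    have := (div_le_iff₀ (by linarith : (0:ℝ) < -c₁)).mp (le_trans hTst2 hTT.le)
    linarith
  have hβ₁T : -K < β₁ * T := by
    have h1 := (div_le_iff₀ hβ₁).mp hTst3
    have h2 : β₁ * Tst < β₁ * T := mul_lt_mul_of_pos_left hTT hβ₁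
    linarith
  have hβ₂T : -K < β₂ * T := by
    have h1 := (div_le_iff₀ hβ₂).mp hTst4
    have h2 : β₂ * Tst < β₂ * T := mul_lt_mul_of_pos_left hTT hβ₂
    linarith
  have hlog2C : Real.log (2*C) = Real.log 2 + Real.log C :=
    Real.log_mul (by norm_num) (ne_of_gt hC0)
  -- small/large components at the endpoints
  have hfm_le : ‖exp ((-(tm i)) • A) v‖ ≤ r :=
    aux_pyth_le _ _ _ hr.le (norm_nonneg _) (norm_nonneg _) hpm
  have hgp_le : ‖exp ((tp i) • A) w‖ ≤ r := by
    refine aux_pyth_le (‖exp ((tp i) • A) w‖) (‖exp ((tp i) • A) v‖) r hr.le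
      (norm_nonneg _) (norm_nonneg _) (by linarith [hpp])
  have hCexp : ∀ u : ℝ, Real.log (2*C) ≤ u → C * Real.exp (-u) ≤ 1/2 := by
    intro u hup
    have h1 : Real.exp (Real.log C - u) ≤ Real.exp (-(Real.log 2)) :=
      Real.exp_le_exp.mpr (by linarith)
    rw [Real.exp_sub, Real.exp_log hC0, Real.exp_neg, Real.exp_log (by norm_num : (0:ℝ) < 2)]
      at h1
    rw [Real.exp_neg, show (1:ℝ)/2 = 2⁻¹ by norm_num]
    rw [div_eq_mul_inv] at h1
    exact h1
  have hgm_small : ‖exp ((-(tm i)) • A) w‖ ≤ r / 2 := by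
    have h1 := hE2 (-(tm i)) (tp i) (by linarith)
    have h2 : tp i - (-(tm i)) = T := by rw [hTdef]; ring
    rw [h2] at h1
    have h3 := hCexp (c₂ * T) hc₂T
    calc ‖exp ((-(tm i)) • A) w‖ ≤ C * Real.exp (-(c₂ * T)) * ‖exp ((tp i) • A) w‖ := h1
      _ ≤ (1/2) * r := by
          apply mul_le_mul h3 hgp_le (norm_nonneg _) (by norm_num)
      _ = r / 2 := by ring
  have hfm_big : r / 2 ≤ ‖exp ((-(tm i)) • A) v‖ :=
    aux_pyth_big _ _ _ hr.le (norm_nonneg _) (norm_nonneg _) hgm_small hpm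
  have hfp_small : ‖exp ((tp i) • A) v‖ ≤ r / 2 := by
    have h1 := hE1 (-(tm i)) (tp i) (by linarith)
    have h2 : tp i - (-(tm i)) = T := by rw [hTdef]; ring
    rw [h2] at h1
    have h3 := hCexp ((-c₁) * T) hc₁T
    have h4 : c₁ * T = -((-c₁) * T) := by ring
    rw [h4] at h1
    calc ‖exp ((tp i) • A) v‖ ≤ C * Real.exp (-((-c₁) * T)) * ‖exp ((-(tm i)) • A) v‖ := h1
      _ ≤ (1/2) * r := by
          apply mul_le_mul h3 hfm_le (norm_nonneg _) (by norm_num)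
      _ = r / 2 := by ring
  have hgp_big : r / 2 ≤ ‖exp ((tp i) • A) w‖ :=
    aux_pyth_big (‖exp ((tp i) • A) w‖) (‖exp ((tp i) • A) v‖) r hr.le
      (norm_nonneg _) (norm_nonneg _) hfp_small (by linarith [hpp])
  constructor
  -- PART 1: the stable cone
  · rw [show tm i + tp i = T from hTdef.symm]
    set τh : ℝ := (c₂ * T + K) / (M + c₂) with hτdef
    have hβ₁T' : -K < c₂ * T - a * (M + c₂) * T := by
      have h3 : β₁ * T = c₂ * T - a * (M + c₂) * T := by rw [hβ₁def]; ring
      linarith [h3 ▸ hβ₁T]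
    have hτgt : a * T < τh := by
      rw [hτdef, lt_div_iff₀ (by linarith)]
      linarith
    have hτle : τh ≤ T := by
      rw [hτdef, div_le_iff₀ (by linarith)]
      linarith [hMT, hKneg]
    have hsub : Set.Ioo (-(tm i)) (-(tm i) + τh) ⊆
        {t : ℝ | t ∈ Set.Ioo (-(tm i)) (tp i) ∧
          projComp Esᗮ (exp (t • A) (x i)) < α * projComp Es (exp (t • A) (x i))} := by
      intro t ht
      obtain ⟨ht1, ht2⟩ := ht
      have hτpos : 0 < t + tm i := by linarith
      have hτlt : (M + c₂) * (t + tm i) < c₂ * T + K := by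
        have := ht2
        rw [hτdef] at this
        have h2 : t + tm i < (c₂ * T + K) / (M + c₂) := by linarith
        rw [lt_div_iff₀ (by linarith)] at h2
        linarith
      have http : t < tp i := by linarith
      refine ⟨⟨ht1, http⟩, ?_⟩
      rw [hfid, hgid]
      -- upper bound on the unstable part
      have hg1 : ‖exp (t • A) w‖ ≤ C * Real.exp (-(c₂ * (tp i - t))) * r := by
        calc ‖exp (t • A) w‖ ≤
            C * Real.exp (-(c₂ * (tp i - t))) * ‖exp ((tp i) • A) w‖ := hE2 t (tp i) http.le
          _ ≤ C * Real.exp (-(c₂ * (tp i - t))) * r := by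
              apply mul_le_mul_of_nonneg_left hgp_le (by positivity)
      -- lower bound on the stable part
      have hf1 : Real.exp (-(M * (t + tm i))) * (r/2) ≤ ‖exp (t • A) v‖ := by
        have h1 := hE3 (t + tm i) (exp ((-(tm i)) • A) v)
        have h2 : exp ((t + tm i) • A) (exp ((-(tm i)) • A) v) = exp (t • A) v := by
          rw [← exp_smul_add]
          congr 2
          ring
        rw [h2, abs_of_pos hτpos] at h1
        have h4 : Real.exp (-(M * (t + tm i))) = (Real.exp ((t + tm i) * M))⁻¹ := by
          rw [show -(M * (t + tm i)) = -((t + tm i) * M) by ring, Real.exp_neg]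
        rw [h4]
        exact aux_le_inv_mul _ _ _ _ (Real.exp_pos _) hfm_big h1
      -- the numeric comparison
      have hkey : C * Real.exp (-(c₂ * (tp i - t))) * r <
          α * (Real.exp (-(M * (t + tm i))) * (r/2)) := by
        have hexp : Real.exp (Real.log C - c₂ * (tp i - t)) <
            Real.exp (Real.log α - Real.log 2 - M * (t + tm i)) := by
          apply Real.exp_lt_exp.mpr
          have h5 : tp i - t = T - (t + tm i) := by rw [hTdef]; ring
          rw [h5]
          rw [hKval] at hτlt
          linarith [hτlt]
        have e1 : C * Real.exp (-(c₂ * (tp i - t))) * r =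
            Real.exp (Real.log C - c₂ * (tp i - t)) * r := by
          rw [Real.exp_sub, Real.exp_log hC0, Real.exp_neg]
          ring
        have e2 : α * (Real.exp (-(M * (t + tm i))) * (r/2)) =
            Real.exp (Real.log α - Real.log 2 - M * (t + tm i)) * r := by
          rw [Real.exp_sub, Real.exp_sub, Real.exp_log hα0,
            Real.exp_log (by norm_num : (0:ℝ) < 2), Real.exp_neg]
          ring
        rw [e1, e2]
        exact mul_lt_mul_of_pos_right hexp hr
      calc ‖exp (t • A) w‖ ≤ C * Real.exp (-(c₂ * (tp i - t))) * r := hg1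
        _ < α * (Real.exp (-(M * (t + tm i))) * (r/2)) := hkey
        _ ≤ α * ‖exp (t • A) v‖ := mul_le_mul_of_nonneg_left hf1 hα0.le
    -- measure estimate
    have hvol : ENNReal.ofReal τh ≤
        volume {t : ℝ | t ∈ Set.Ioo (-(tm i)) (tp i) ∧
          projComp Esᗮ (exp (t • A) (x i)) < α * projComp Es (exp (t • A) (x i))} := by
      calc ENNReal.ofReal τh = volume (Set.Ioo (-(tm i)) (-(tm i) + τh)) := by
            rw [Real.volume_Ioo]; congr 1; ring
        _ ≤ _ := measure_mono hsub
    have hfin : volume {t : ℝ | t ∈ Set.Ioo (-(tm i)) (tp i) ∧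
        projComp Esᗮ (exp (t • A) (x i)) < α * projComp Es (exp (t • A) (x i))} ≠ ⊤ := by
      apply ne_top_of_le_ne_top (b := volume (Set.Ioo (-(tm i)) (tp i)))
      · rw [Real.volume_Ioo]; exact ENNReal.ofReal_ne_top
      · exact measure_mono fun t ht => ht.1
    have h6 : τh ≤ (volume {t : ℝ | t ∈ Set.Ioo (-(tm i)) (tp i) ∧
        projComp Esᗮ (exp (t • A) (x i)) < α * projComp Es (exp (t • A) (x i))}).toReal := by
      have := ENNReal.toReal_mono hfin hvol
      rwa [ENNReal.toReal_ofReal (le_trans (mul_pos hapos hTpos).le hτgt.le)] at this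
    linarith
  -- PART 2: the unstable cone
  · rw [show tm i + tp i = T from hTdef.symm]
    set σh : ℝ := ((-c₁) * T + K) / (M - c₁) with hσdef
    have hβ₂T' : -K < (-c₁) * T - a * (M - c₁) * T := by
      have h3 : β₂ * T = (-c₁) * T - a * (M - c₁) * T := by rw [hβ₂def]; ring
      linarith [h3 ▸ hβ₂T]
    have hσgt : a * T < σh := by
      rw [hσdef, lt_div_iff₀ (by linarith)]
      linarith
    have hσle : σh ≤ T := by
      rw [hσdef, div_le_iff₀ (by linarith)]
      linarith [hMT, hKneg]
    have hsub : Set.Ioo (tp i - σh) (tp i) ⊆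
        {t : ℝ | t ∈ Set.Ioo (-(tm i)) (tp i) ∧
          projComp Es (exp (t • A) (x i)) < α * projComp Esᗮ (exp (t • A) (x i))} := by
      intro t ht
      obtain ⟨ht1, ht2⟩ := ht
      have hσpos : 0 < tp i - t := by linarith
      have hσlt : (M - c₁) * (tp i - t) < (-c₁) * T + K := by
        have h2 : tp i - t < ((-c₁) * T + K) / (M - c₁) := by linarith
        rw [lt_div_iff₀ (by linarith)] at h2
        linarith
      have httm : -(tm i) < t := by linarith
      refine ⟨⟨httm, ht2⟩, ?_⟩
      rw [hfid, hgid]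
      -- upper bound on the stable part
      have hf1 : ‖exp (t • A) v‖ ≤ C * Real.exp (c₁ * (t + tm i)) * r := by
        have h1 := hE1 (-(tm i)) t (by linarith)
        have h2 : t - (-(tm i)) = t + tm i := by ring
        rw [h2] at h1
        calc ‖exp (t • A) v‖ ≤
            C * Real.exp (c₁ * (t + tm i)) * ‖exp ((-(tm i)) • A) v‖ := h1
          _ ≤ C * Real.exp (c₁ * (t + tm i)) * r := by
              apply mul_le_mul_of_nonneg_left hfm_le (by positivity)
      -- lower bound on the unstable part
      have hg1 : Real.exp (-(M * (tp i - t))) * (r/2) ≤ ‖exp (t • A) w‖ := by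
        have h1 := hE3 (t - tp i) (exp ((tp i) • A) w)
        have h2 : exp ((t - tp i) • A) (exp ((tp i) • A) w) = exp (t • A) w := by
          rw [← exp_smul_add]
          congr 2
          ring
        have h3 : |t - tp i| = tp i - t := by
          rw [abs_of_neg (by linarith)]; ring
        rw [h2, h3] at h1
        have h4 : Real.exp (-(M * (tp i - t))) = (Real.exp ((tp i - t) * M))⁻¹ := by
          rw [show -(M * (tp i - t)) = -((tp i - t) * M) by ring, Real.exp_neg]
        rw [h4]
        exact aux_le_inv_mul _ _ _ _ (Real.exp_pos _) hgp_big h1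
      have hkey : C * Real.exp (c₁ * (t + tm i)) * r <
          α * (Real.exp (-(M * (tp i - t))) * (r/2)) := by
        have hexp : Real.exp (Real.log C + c₁ * (t + tm i)) <
            Real.exp (Real.log α - Real.log 2 - M * (tp i - t)) := by
          apply Real.exp_lt_exp.mpr
          have h5 : t + tm i = T - (tp i - t) := by rw [hTdef]; ring
          rw [h5]
          rw [hKval] at hσlt
          linarith [hσlt]
        have e1 : C * Real.exp (c₁ * (t + tm i)) * r =
            Real.exp (Real.log C + c₁ * (t + tm i)) * r := by
          rw [Real.exp_add, Real.exp_log hC0]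
        have e2 : α * (Real.exp (-(M * (tp i - t))) * (r/2)) =
            Real.exp (Real.log α - Real.log 2 - M * (tp i - t)) * r := by
          rw [Real.exp_sub, Real.exp_sub, Real.exp_log hα0,
            Real.exp_log (by norm_num : (0:ℝ) < 2), Real.exp_neg]
          ring
        rw [e1, e2]
        exact mul_lt_mul_of_pos_right hexp hr
      calc ‖exp (t • A) v‖ ≤ C * Real.exp (c₁ * (t + tm i)) * r := hf1
        _ < α * (Real.exp (-(M * (tp i - t))) * (r/2)) := hkey
        _ ≤ α * ‖exp (t • A) w‖ := mul_le_mul_of_nonneg_left hg1 hα0.le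
    have hvol : ENNReal.ofReal σh ≤
        volume {t : ℝ | t ∈ Set.Ioo (-(tm i)) (tp i) ∧
          projComp Es (exp (t • A) (x i)) < α * projComp Esᗮ (exp (t • A) (x i))} := by
      calc ENNReal.ofReal σh = volume (Set.Ioo (tp i - σh) (tp i)) := by
            rw [Real.volume_Ioo]; congr 1; ring
        _ ≤ _ := measure_mono hsub
    have hfin : volume {t : ℝ | t ∈ Set.Ioo (-(tm i)) (tp i) ∧
        projComp Es (exp (t • A) (x i)) < α * projComp Esᗮ (exp (t • A) (x i))} ≠ ⊤ := by
      apply ne_top_of_le_ne_top (b := volume (Set.Ioo (-(tm i)) (tp i)))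
      · rw [Real.volume_Ioo]; exact ENNReal.ofReal_ne_top
      · exact measure_mono fun t ht => ht.1
    have h6 : σh ≤ (volume {t : ℝ | t ∈ Set.Ioo (-(tm i)) (tp i) ∧
        projComp Es (exp (t • A) (x i)) < α * projComp Esᗮ (exp (t • A) (x i))}).toReal := by
      have := ENNReal.toReal_mono hfin hvol
      rwa [ENNReal.toReal_ofReal (le_trans (mul_pos hapos hTpos).le hσgt.le)] at this
    linarith
end

section
/- Let α > 0 and let y ≠ 0 satisfy ‖P_Eu(Ay)‖ ≤ α·‖P_Ecs(Ay)‖ (the flow direction at y lies in the α-cone of Ecs). Then for every t ≥ 0 and every v ∈ Eu with v ⊥ Ay: ‖ψ*_{−t}(y)v‖ ≤ C²·√(1+α²)·exp(−(λ_u − λ_s)·t)·‖v‖. In particular the scaled linear Poincaré flow is uniformly exponentially backward contracting on unstable normal directions at points whose flow direction lies in the center-stable cone (linear-model form of Case 1 of Lemma 3.8). -/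
set_option maxHeartbeats 1000000
set_option synthInstance.maxHeartbeats 1000000


open NormedSpace RealInnerProductSpace

lemma submodule_exp_mem {d : ℕ} (p : Submodule ℝ (EuclideanSpace ℝ (Fin d)))
    (T : EuclideanSpace ℝ (Fin d) →L[ℝ] EuclideanSpace ℝ (Fin d))
    (h : ∀ v ∈ p, T v ∈ p) : ∀ v ∈ p, exp T v ∈ p := by
  intro v hv
  have hpow : ∀ n : ℕ, (T ^ n) v ∈ p := by
    intro n
    induction n with
    | zero => simpa using hv
    | succ n ih =>
      have : (T ^ (n + 1)) v = T ((T ^ n) v) := by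
        rw [pow_succ']; rfl
      rw [this]; exact h _ ih
  have h1 : HasSum (fun n : ℕ => (Nat.factorial n : ℝ)⁻¹ • T ^ n) (exp T) := by
    rw [exp_eq_tsum ℝ]; exact (expSeries_summable' T).hasSum
  have hsum : HasSum (fun n : ℕ => (Nat.factorial n : ℝ)⁻¹ • (T ^ n) v) (exp T v) := by
    simpa using h1.mapL (ContinuousLinearMap.apply ℝ (EuclideanSpace ℝ (Fin d)) v)
  have hcl : IsClosed (p : Set (EuclideanSpace ℝ (Fin d))) := p.closed_of_finiteDimensional
  refine hcl.mem_of_tendsto hsum.tendsto_sum_nat (Filter.Eventually.of_forall fun n => ?_)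
  exact Submodule.sum_mem p fun i _ => p.smul_mem _ (hpow i)

lemma exp_smul_neg_smul_apply {d : ℕ}
    (A : EuclideanSpace ℝ (Fin d) →L[ℝ] EuclideanSpace ℝ (Fin d)) (t : ℝ)
    (w : EuclideanSpace ℝ (Fin d)) :
    exp (t • A) (exp ((-t) • A) w) = w := by
  have hc : Commute (t • A) ((-t) • A) := by
    refine ContinuousLinearMap.ext fun x => ?_
    simp [ContinuousLinearMap.mul_apply, map_smul, smul_smul, mul_comm]
  have h1 : exp (t • A) * exp ((-t) • A) = 1 := by
    rw [← (letI : NormedAlgebra ℚ (EuclideanSpace ℝ (Fin d) →L[ℝ] EuclideanSpace ℝ (Fin d)) := .restrictScalars ℚ ℝ _; exp_add_of_commute hc)]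
    have h0 : t • A + (-t) • A = 0 := by ext x; simp
    rw [h0, exp_zero]
  calc exp (t • A) (exp ((-t) • A) w)
      = (exp (t • A) * exp ((-t) • A)) w := rfl
    _ = w := by rw [h1]; rfl


/-- Linear-model form of Case 1 of Lemma 3.8: near a Lorenz-like singularity
(orthogonal `A`-invariant splitting `E = Ecs ⊕ Eu` with rates `λ_s < 0 < λ_u`), at a
point `y ≠ 0` whose flow direction lies in the `α`-cone of `Ecs`, the scaled linear
Poincaré flow contracts unstable normal directions uniformly exponentially backwards:
`‖ψ*_{−t}(y)v‖ ≤ C²·√(1+α²)·exp(−(λ_u − λ_s)t)·‖v‖` for `v ∈ Eu`, `v ⊥ Ay`, `t ≥ 0`. -/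
theorem scaledLPF_backward_contracts_unstable {d : ℕ}
    (A : EuclideanSpace ℝ (Fin d) →L[ℝ] EuclideanSpace ℝ (Fin d))
    (hA : Function.Bijective A)
    (Ecs : Submodule ℝ (EuclideanSpace ℝ (Fin d)))
    (C lamS lamU : ℝ) (hC : 1 ≤ C) (hlamS : lamS < 0) (hlamU : 0 < lamU)
    (hinvcs : ∀ v ∈ Ecs, A v ∈ Ecs) (hinvu : ∀ v ∈ Ecsᗮ, A v ∈ Ecsᗮ)
    (hcs : ∀ v ∈ Ecs, ∀ t : ℝ, 0 ≤ t →
      ‖exp (t • A) v‖ ≤ C * Real.exp (lamS * t) * ‖v‖)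
    (hu : ∀ v ∈ Ecsᗮ, ∀ t : ℝ, 0 ≤ t →
      C⁻¹ * Real.exp (lamU * t) * ‖v‖ ≤ ‖exp (t • A) v‖)
    (α : ℝ) (hα : 0 < α)
    (y : EuclideanSpace ℝ (Fin d)) (hy : y ≠ 0)
    (hdir : ‖(Submodule.orthogonalProjectionOnto Ecsᗮ (A y) : EuclideanSpace ℝ (Fin d))‖ ≤
      α * ‖(Submodule.orthogonalProjectionOnto Ecs (A y) : EuclideanSpace ℝ (Fin d))‖) :
    ∀ t : ℝ, 0 ≤ t → ∀ v ∈ Ecsᗮ, ⟪v, A y⟫ = 0 →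
      ‖scaledLPF A (-t) y v‖ ≤
        C ^ 2 * Real.sqrt (1 + α ^ 2) * Real.exp (-(lamU - lamS) * t) * ‖v‖ := by
  
  intro t ht v hv _
  have hC0 : (0 : ℝ) < C := lt_of_lt_of_le one_pos hC
  set B : EuclideanSpace ℝ (Fin d) →L[ℝ] EuclideanSpace ℝ (Fin d) :=
    exp ((-t) • A) with hBdef
  have hFB : ∀ w, exp (t • A) (B w) = w := exp_smul_neg_smul_apply A t
  -- invariance of Ecs and Ecsᗮ under B
  have hinvcs' : ∀ w ∈ Ecs, B w ∈ Ecs := by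
    refine submodule_exp_mem Ecs ((-t) • A) fun w hw => ?_
    rw [ContinuousLinearMap.smul_apply]
    exact Ecs.smul_mem _ (hinvcs w hw)
  have hinvu' : ∀ w ∈ Ecsᗮ, B w ∈ Ecsᗮ := by
    refine submodule_exp_mem Ecsᗮ ((-t) • A) fun w hw => ?_
    rw [ContinuousLinearMap.smul_apply]
    exact Ecsᗮ.smul_mem _ (hinvu w hw)
  -- A commutes with B
  have hcomm : ∀ w, A (B w) = B (A w) := by
    intro w
    have hc : Commute A ((-t) • A) := by
      refine ContinuousLinearMap.ext fun x => ?_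
      simp [ContinuousLinearMap.mul_apply, map_smul]
    have hc2 : A * B = B * A := (hc.exp_right).eq
    calc A (B w) = (A * B) w := rfl
      _ = (B * A) w := by rw [hc2]
      _ = B (A w) := rfl
  -- projections of A y
  set s : EuclideanSpace ℝ (Fin d) := (Submodule.orthogonalProjectionOnto Ecs (A y) : EuclideanSpace ℝ (Fin d)) with hsdef
  set u : EuclideanSpace ℝ (Fin d) := (Submodule.orthogonalProjectionOnto Ecsᗮ (A y) : EuclideanSpace ℝ (Fin d)) with hudef
  have hsu : s + u = A y := Submodule.starProjection_add_starProjection_orthogonal (K := Ecs) (A y)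
  have hs_mem : s ∈ Ecs := (Submodule.orthogonalProjectionOnto Ecs (A y)).2
  have hu_mem : u ∈ Ecsᗮ := (Submodule.orthogonalProjectionOnto Ecsᗮ (A y)).2
  have hAy : A y ≠ 0 := fun h => hy (hA.injective (by simpa using h))
  have hs_pos : 0 < ‖s‖ := by
    rcases eq_or_lt_of_le (norm_nonneg s) with h | h
    · exfalso
      have hs0 : s = 0 := by rwa [eq_comm, norm_eq_zero] at h
      have hu0 : u = 0 := by
        have h2 := hdir
        rw [hs0, norm_zero, mul_zero] at h2
        exact norm_eq_zero.mp (le_antisymm h2 (norm_nonneg u))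
      exact hAy (by rw [← hsu, hs0, hu0, add_zero])
    · exact h
  have hinner_su : ⟪s, u⟫ = 0 := (Submodule.mem_orthogonal Ecs u).mp hu_mem s hs_mem
  -- cone estimate : ‖A y‖ ≤ √(1+α²) ‖s‖
  have hAy_le : ‖A y‖ ≤ Real.sqrt (1 + α ^ 2) * ‖s‖ := by
    have hsq : ‖A y‖ ^ 2 ≤ (1 + α ^ 2) * ‖s‖ ^ 2 := by
      rw [← hsu, norm_add_sq_real, hinner_su]
      have : ‖u‖ ^ 2 ≤ (α * ‖s‖) ^ 2 := by
        have h0 : (0:ℝ) ≤ ‖u‖ := norm_nonneg u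
        nlinarith [hdir]
      nlinarith
    have h1 : ‖A y‖ = Real.sqrt (‖A y‖ ^ 2) := (Real.sqrt_sq (norm_nonneg _)).symm
    rw [h1]
    calc Real.sqrt (‖A y‖ ^ 2) ≤ Real.sqrt ((1 + α ^ 2) * ‖s‖ ^ 2) := Real.sqrt_le_sqrt hsq
      _ = Real.sqrt (1 + α ^ 2) * ‖s‖ := by
          rw [Real.sqrt_mul (by positivity), Real.sqrt_sq (norm_nonneg _)]
  -- lower bound for the denominator
  have hBAy : A (B y) = B s + B u := by rw [hcomm, ← hsu, map_add]
  have hBs_le : ‖B s‖ ≤ ‖A (B y)‖ := by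
    have hio : ⟪B s, B u⟫ = 0 :=
      (Submodule.mem_orthogonal Ecs (B u)).mp (hinvu' u hu_mem) (B s) (hinvcs' s hs_mem)
    have hsq : ‖B s‖ ^ 2 ≤ ‖B s + B u‖ ^ 2 := by
      rw [norm_add_sq_real, hio]; nlinarith [norm_nonneg (B u)]
    have := le_of_pow_le_pow_left₀ (n := 2) (by norm_num) (norm_nonneg (B s + B u)) hsq
    rwa [hBAy]
  have hs_le : ‖s‖ ≤ C * Real.exp (lamS * t) * ‖B s‖ := by
    have := hcs (B s) (hinvcs' s hs_mem) t ht
    rwa [hFB s] at this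
  have hden_pos : 0 < ‖A (B y)‖ := by
    rw [norm_pos_iff]
    intro h
    have hBy : B y = 0 := hA.injective (by simpa using h)
    exact hy (by rw [← hFB y, hBy, map_zero])
  -- scale factor bound
  have hexpS : (0:ℝ) < Real.exp (lamS * t) := Real.exp_pos _
  have hsqrt : (0:ℝ) < Real.sqrt (1 + α ^ 2) := Real.sqrt_pos.mpr (by positivity)
  have hscale : ‖A y‖ / ‖A (B y)‖ ≤ C * Real.sqrt (1 + α ^ 2) * Real.exp (lamS * t) := by
    rw [div_le_iff₀ hden_pos]
    calc ‖A y‖ ≤ Real.sqrt (1 + α ^ 2) * ‖s‖ := hAy_le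
      _ ≤ Real.sqrt (1 + α ^ 2) * (C * Real.exp (lamS * t) * ‖B s‖) := by
          exact mul_le_mul_of_nonneg_left hs_le (le_of_lt hsqrt)
      _ ≤ Real.sqrt (1 + α ^ 2) * (C * Real.exp (lamS * t) * ‖A (B y)‖) := by
          refine mul_le_mul_of_nonneg_left ?_ (le_of_lt hsqrt)
          exact mul_le_mul_of_nonneg_left hBs_le (by positivity)
      _ = C * Real.sqrt (1 + α ^ 2) * Real.exp (lamS * t) * ‖A (B y)‖ := by ring
  -- unstable contraction bound
  have hv_bound : ‖B v‖ ≤ C * Real.exp (-(lamU * t)) * ‖v‖ := by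
    have h1 : C⁻¹ * Real.exp (lamU * t) * ‖B v‖ ≤ ‖v‖ := by
      have := hu (B v) (hinvu' v hv) t ht
      rwa [hFB v] at this
    have hexpU : (0:ℝ) < Real.exp (lamU * t) := Real.exp_pos _
    have key : ‖B v‖ = C * (Real.exp (lamU * t))⁻¹ * (C⁻¹ * Real.exp (lamU * t) * ‖B v‖) := by
      field_simp
    rw [key, Real.exp_neg]
    exact mul_le_mul_of_nonneg_left h1 (by positivity)
  -- projection bound
  have hproj : ‖(Submodule.orthogonalProjectionOnto (ℝ ∙ (A (B y)))ᗮ (B v) : EuclideanSpace ℝ (Fin d))‖ ≤ ‖B v‖ := by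
    have h1 := (Submodule.orthogonalProjectionOnto (ℝ ∙ (A (B y)))ᗮ).le_opNorm (B v)
    have h2 : ‖Submodule.orthogonalProjectionOnto (ℝ ∙ (A (B y)))ᗮ‖ ≤ 1 := Submodule.orthogonalProjectionOnto_norm_le _
    calc ‖(Submodule.orthogonalProjectionOnto (ℝ ∙ (A (B y)))ᗮ (B v) : EuclideanSpace ℝ (Fin d))‖
        = ‖Submodule.orthogonalProjectionOnto (ℝ ∙ (A (B y)))ᗮ (B v)‖ := rfl
      _ ≤ ‖Submodule.orthogonalProjectionOnto (ℝ ∙ (A (B y)))ᗮ‖ * ‖B v‖ := h1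
      _ ≤ 1 * ‖B v‖ := mul_le_mul_of_nonneg_right h2 (norm_nonneg _)
      _ = ‖B v‖ := one_mul _
  -- put it all together
  rw [scaledLPF, norm_smul]
  rw [Real.norm_of_nonneg (div_nonneg (norm_nonneg _) (norm_nonneg _))]
  have hexpeq : Real.exp (lamS * t) * Real.exp (-(lamU * t)) = Real.exp (-(lamU - lamS) * t) := by
    rw [← Real.exp_add]; ring_nf
  calc ‖A y‖ / ‖A (B y)‖ *
        ‖(Submodule.orthogonalProjectionOnto (ℝ ∙ (A (B y)))ᗮ (B v) : EuclideanSpace ℝ (Fin d))‖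
      ≤ (C * Real.sqrt (1 + α ^ 2) * Real.exp (lamS * t)) * (C * Real.exp (-(lamU * t)) * ‖v‖) := by
        refine mul_le_mul hscale (hproj.trans hv_bound) (norm_nonneg _) (by positivity)
    _ = C ^ 2 * Real.sqrt (1 + α ^ 2) * (Real.exp (lamS * t) * Real.exp (-(lamU * t))) * ‖v‖ := by
        ring
    _ = C ^ 2 * Real.sqrt (1 + α ^ 2) * Real.exp (-(lamU - lamS) * t) * ‖v‖ := by
        rw [hexpeq]
end

section
/- Let α ∈ (0,1), let y ≠ 0, let T > 0, and suppose the flow direction stays in the α-cone of Eu along the backward orbit segment: ‖P_{Ess⊕Ec}(A·exp(−tA)y)‖ ≤ α·‖P_Eu(A·exp(−tA)y)‖ for all t ∈ [0,T]. Let v be the orthogonal projection of e_c onto N_y = (ℝ∙Ay)ᗮ. Then ‖v‖ ≥ (1+α²)^{−1/2} > 0, and for every t ∈ [0,T]: ‖ψ*_{−t}(y)v‖ ≥ C⁻²·(1+α²)⁻¹·exp((λ_u − λ_c)·t). Consequently, since λ_u − λ_c > 0, the scaled linear Poincaré flow admits a normal vector at y that is exponentially expanded under ψ*_{−t}, so no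 subsegment of such an orbit segment is backward contracting (linear-model form of Case 2 of Lemma 3.8). -/
open NormedSpace

theorem myExp_apply (B : EuclideanSpace ℝ (Fin d) →L[ℝ] EuclideanSpace ℝ (Fin d))
    (x : EuclideanSpace ℝ (Fin d)) :
    exp B x = ∑' n : ℕ, ((n.factorial : ℝ))⁻¹ • (B ^ n) x := by
  have h := expSeries_summable' (𝕂 := ℝ) B
  have h2 := (ContinuousLinearMap.apply ℝ (EuclideanSpace ℝ (Fin d)) x).map_tsum h
  rw [exp_eq_tsum ℝ]
  simpa using h2

theorem myExp_eigen (B : EuclideanSpace ℝ (Fin d) →L[ℝ] EuclideanSpace ℝ (Fin d))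
    (e : EuclideanSpace ℝ (Fin d)) (μ : ℝ) (hB : B e = μ • e) (s : ℝ) :
    exp (s • B) e = Real.exp (s * μ) • e := by
  have hpow : ∀ n : ℕ, ((s • B) ^ n) e = (s * μ) ^ n • e := by
    intro n
    induction n with
    | zero => simp
    | succ n ih =>
      rw [pow_succ, ContinuousLinearMap.mul_apply]
      have : (s • B) e = (s * μ) • e := by
        rw [ContinuousLinearMap.smul_apply, hB, smul_smul]
      rw [this, map_smul, ih, smul_smul, ← pow_succ']
  rw [myExp_apply]
  simp_rw [hpow, smul_smul]
  rw [Summable.tsum_smul_const]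
  · congr 1
    rw [Real.exp_eq_exp_ℝ, exp_eq_tsum ℝ]
    exact tsum_congr fun n => by rw [smul_eq_mul]
  · exact (expSeries_summable' (𝕂 := ℝ) (s * μ)).congr (by simp [smul_eq_mul])

theorem myExp_invariant (B : EuclideanSpace ℝ (Fin d) →L[ℝ] EuclideanSpace ℝ (Fin d))
    (S : Submodule ℝ (EuclideanSpace ℝ (Fin d))) (hS : ∀ x ∈ S, B x ∈ S)
    {x : EuclideanSpace ℝ (Fin d)} (hx : x ∈ S) : exp B x ∈ S := by
  have hpow : ∀ n : ℕ, (B ^ n) x ∈ S := by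
    intro n
    induction n with
    | zero => simpa using hx
    | succ n ih => rw [pow_succ']; exact hS _ ih
  have hsummable : Summable fun n : ℕ => ((n.factorial : ℝ))⁻¹ • (B ^ n) x := by
    have h := expSeries_summable' (𝕂 := ℝ) B
    have := h.map (ContinuousLinearMap.apply ℝ (EuclideanSpace ℝ (Fin d)) x)
      (ContinuousLinearMap.apply ℝ (EuclideanSpace ℝ (Fin d)) x).continuous
    simpa [Function.comp_def] using this
  rw [myExp_apply]
  have hclosed : IsClosed (S : Set (EuclideanSpace ℝ (Fin d))) :=
    Submodule.closed_of_finiteDimensional S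
  refine hclosed.mem_of_tendsto hsummable.hasSum.tendsto_sum_nat ?_
  filter_upwards with n
  exact Submodule.sum_mem S fun i _ => Submodule.smul_mem S _ (hpow i)


private theorem real_sq_le (a b : ℝ) (hb : 0 ≤ b) (h : a ^ 2 ≤ b ^ 2) (ha : 0 ≤ a) : a ≤ b := by
  nlinarith

private theorem real_cone_core (a s U Z av : ℝ) (hs : 0 ≤ s) (hU : 0 ≤ U)
    (h1 : |a| ≤ s) (h2 : s ≤ av * U) (h3 : s ^ 2 + U ^ 2 ≤ Z ^ 2) :
    a ^ 2 * (1 + av ^ 2) ≤ av ^ 2 * Z ^ 2 := by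
  have ha2 : a ^ 2 ≤ s ^ 2 := by nlinarith [sq_abs a, abs_nonneg a]
  have hs2 : s ^ 2 ≤ av ^ 2 * U ^ 2 := by nlinarith
  have h4 : av ^ 2 * (s ^ 2 + U ^ 2) ≤ av ^ 2 * Z ^ 2 :=
    mul_le_mul_of_nonneg_left h3 (sq_nonneg av)
  have h5 : a ^ 2 * av ^ 2 ≤ s ^ 2 * av ^ 2 :=
    mul_le_mul_of_nonneg_right ha2 (sq_nonneg av)
  nlinarith [ha2, hs2, h4, h5]

set_option maxHeartbeats 1000000 in
set_option synthInstance.maxHeartbeats 400000 in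
/-- Linear-model form of Case 2 of Lemma 3.8: near a Lorenz-like singularity with
orthogonal `A`-invariant splitting `E = Ess ⊕ Ec ⊕ Eu`, `dim Ec = 1` spanned by the unit
vector `e_c`, and rates `λ_c < 0 < λ_u` on `Ec`, `Eu`, if the flow direction stays in the
`α`-cone of `Eu` along the backward orbit segment of `y` of length `T`, then the
projection `v` of `e_c` to `N_y = (ℝ∙Ay)ᗮ` satisfies `‖v‖ ≥ (1+α²)^{-1/2}` and is
exponentially expanded by the backward scaled linear Poincaré flow:
`‖ψ*_{−t}(y) v‖ ≥ C⁻²·(1+α²)⁻¹·exp((λ_u − λ_c)·t)` for all `t ∈ [0,T]`; since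
`λ_u − λ_c > 0`, no subsegment of such an orbit segment is backward contracting. -/
theorem scaledLPF_expands_center_in_unstable_cone {d : ℕ}
    (A : EuclideanSpace ℝ (Fin d) →L[ℝ] EuclideanSpace ℝ (Fin d))
    (hA : Function.Bijective A)
    (Ess Ec Eu : Submodule ℝ (EuclideanSpace ℝ (Fin d)))
    (e_c : EuclideanSpace ℝ (Fin d)) (hec : ‖e_c‖ = 1) (hEc : Ec = ℝ ∙ e_c)
    (horth₁ : Ec ≤ Essᗮ) (horth₂ : Eu ≤ Essᗮ) (horth₃ : Eu ≤ Ecᗮ)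
    (hsum : Ess ⊔ Ec ⊔ Eu = ⊤)
    (hinvss : ∀ v ∈ Ess, A v ∈ Ess) (hinvc : ∀ v ∈ Ec, A v ∈ Ec)
    (hinvu : ∀ v ∈ Eu, A v ∈ Eu)
    (C lamC lamU : ℝ) (hC : 1 ≤ C) (hlamC : lamC < 0) (hlamU : 0 < lamU)
    (hc : ∀ v ∈ Ec, ∀ t : ℝ, 0 ≤ t →
      C⁻¹ * Real.exp (lamC * t) * ‖v‖ ≤ ‖exp (t • A) v‖ ∧
      ‖exp (t • A) v‖ ≤ C * Real.exp (lamC * t) * ‖v‖)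
    (hu : ∀ v ∈ Eu, ∀ t : ℝ, 0 ≤ t →
      C⁻¹ * Real.exp (lamU * t) * ‖v‖ ≤ ‖exp (t • A) v‖)
    (α : ℝ) (hα : α ∈ Set.Ioo (0 : ℝ) 1)
    (y : EuclideanSpace ℝ (Fin d)) (hy : y ≠ 0)
    (T : ℝ) (hT : 0 < T)
    (hdir : ∀ t ∈ Set.Icc (0 : ℝ) T,
      ‖(Submodule.orthogonalProjectionOnto (Ess ⊔ Ec) (A (exp ((-t) • A) y)) :
          EuclideanSpace ℝ (Fin d))‖ ≤
        α * ‖(Submodule.orthogonalProjectionOnto Eu (A (exp ((-t) • A) y)) :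
          EuclideanSpace ℝ (Fin d))‖) :
    (Real.sqrt (1 + α ^ 2))⁻¹ ≤
      ‖(Submodule.orthogonalProjectionOnto (ℝ ∙ (A y))ᗮ e_c : EuclideanSpace ℝ (Fin d))‖ ∧
    ∀ t ∈ Set.Icc (0 : ℝ) T,
      C⁻¹ ^ 2 * (1 + α ^ 2)⁻¹ * Real.exp ((lamU - lamC) * t) ≤
        ‖scaledLPF A (-t) y
          (Submodule.orthogonalProjectionOnto (ℝ ∙ (A y))ᗮ e_c : EuclideanSpace ℝ (Fin d))‖ := by
  obtain ⟨hα0, hα1⟩ := hα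
  have hα2pos : (0:ℝ) < 1 + α ^ 2 := by positivity
  have hsqrtpos : (0:ℝ) < Real.sqrt (1 + α ^ 2) := Real.sqrt_pos.mpr hα2pos
  have hCpos : (0:ℝ) < C := lt_of_lt_of_le one_pos hC
  -- the eigenvalue on Ec
  have hecEc : e_c ∈ Ec := by rw [hEc]; exact Submodule.mem_span_singleton_self e_c
  obtain ⟨μ, hμ⟩ : ∃ μ : ℝ, A e_c = μ • e_c := by
    have := hinvc e_c hecEc
    rw [hEc] at this
    obtain ⟨μ, hμ⟩ := Submodule.mem_span_singleton.mp this
    exact ⟨μ, hμ.symm⟩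
  set W : Submodule ℝ (EuclideanSpace ℝ (Fin d)) := Ess ⊔ Ec with hW
  have hinvW : ∀ v ∈ W, A v ∈ W := by
    intro v hv
    obtain ⟨a, ha, b, hb, rfl⟩ := Submodule.mem_sup.mp hv
    rw [map_add]
    exact Submodule.add_mem _ (Submodule.mem_sup_left (hinvss a ha))
      (Submodule.mem_sup_right (hinvc b hb))
  -- Eu is the orthogonal complement of W
  have hEuleW : Eu ≤ Wᗮ := by
    intro x hx
    rw [Submodule.mem_orthogonal]
    intro u hu'
    obtain ⟨a, ha, b, hb, rfl⟩ := Submodule.mem_sup.mp hu'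
    rw [inner_add_left]
    have h1 : inner ℝ a x = (0:ℝ) := (Submodule.mem_orthogonal Ess x).mp (horth₂ hx) a ha
    have h2 : inner ℝ b x = (0:ℝ) := (Submodule.mem_orthogonal Ec x).mp (horth₃ hx) b hb
    rw [h1, h2, add_zero]
  have hEuW : Eu = Wᗮ := by
    apply le_antisymm hEuleW
    intro x hx
    have hxtop : x ∈ W ⊔ Eu := by rw [hW, hsum]; trivial
    obtain ⟨a, ha, b, hb, rfl⟩ := Submodule.mem_sup.mp hxtop
    have hbW : b ∈ Wᗮ := hEuleW hb
    have haW : a ∈ Wᗮ := by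
      have : a = (a + b) - b := by abel
      rw [this]; exact Submodule.sub_mem _ hx hbW
    have : a = 0 := by
      have := (Submodule.mem_orthogonal W a).mp haW a ha
      exact inner_self_eq_zero.mp this
    rw [this, zero_add]; exact hb
  have hEcleW : Ec ≤ W := le_sup_right
  have hWleEuo : W ≤ Euᗮ := by
    rw [hEuW]; exact Submodule.le_orthogonal_orthogonal W
  have hEcleEuo : Ec ≤ Euᗮ := le_trans hEcleW hWleEuo
  -- norm of a projection is at most the norm
  have hproj_le : ∀ (S : Submodule ℝ (EuclideanSpace ℝ (Fin d)))
      (x : EuclideanSpace ℝ (Fin d)),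
      ‖(Submodule.orthogonalProjectionOnto S x : EuclideanSpace ℝ (Fin d))‖ ≤ ‖x‖ := by
    intro S x
    have h := Submodule.norm_sq_eq_add_norm_sq_projection x S
    simp only [Submodule.coe_norm] at h
    refine real_sq_le _ _ (norm_nonneg x) ?_ (norm_nonneg _)
    nlinarith [norm_nonneg (Submodule.orthogonalProjectionOnto Sᗮ x : EuclideanSpace ℝ (Fin d))]
  -- THE CONE LEMMA
  have key : ∀ z : EuclideanSpace ℝ (Fin d), z ≠ 0 →
      ‖(Submodule.orthogonalProjectionOnto W z : EuclideanSpace ℝ (Fin d))‖ ≤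
        α * ‖(Submodule.orthogonalProjectionOnto Eu z : EuclideanSpace ℝ (Fin d))‖ →
      (Real.sqrt (1 + α ^ 2))⁻¹ ≤
        ‖(Submodule.orthogonalProjectionOnto (ℝ ∙ z)ᗮ e_c : EuclideanSpace ℝ (Fin d))‖ := by
    intro z hz hcone
    set s := ‖(Submodule.orthogonalProjectionOnto Ec z : EuclideanSpace ℝ (Fin d))‖ with hs
    set U := ‖(Submodule.orthogonalProjectionOnto Eu z : EuclideanSpace ℝ (Fin d))‖ with hU
    have hzpos : (0:ℝ) < ‖z‖ := norm_pos_iff.mpr hz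
    have hsnn : 0 ≤ s := norm_nonneg _
    have hUnn : 0 ≤ U := norm_nonneg _
    -- inner ℝ product with e_c factors through Ec-projection
    have hinner : |(inner ℝ z e_c : ℝ)| ≤ s := by
      have hr := Submodule.sub_starProjection_mem_orthogonal (K := Ec) z
      have h0 : (inner ℝ (z - (Submodule.orthogonalProjectionOnto Ec z : EuclideanSpace ℝ (Fin d))) e_c : ℝ)
          = 0 := by
        rw [real_inner_comm]
        exact (Submodule.mem_orthogonal Ec _).mp hr e_c hecEc
      have h1 : (inner ℝ z e_c : ℝ)
          = inner ℝ ((Submodule.orthogonalProjectionOnto Ec z : EuclideanSpace ℝ (Fin d))) e_c := by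
        have h2 := inner_sub_left (𝕜 := ℝ) z
          ((Submodule.orthogonalProjectionOnto Ec z : EuclideanSpace ℝ (Fin d))) e_c
        rw [h0] at h2
        linarith [h2.symm]
      rw [h1]
      calc |(inner ℝ ((Submodule.orthogonalProjectionOnto Ec z : EuclideanSpace ℝ (Fin d))) e_c : ℝ)|
          ≤ ‖(Submodule.orthogonalProjectionOnto Ec z : EuclideanSpace ℝ (Fin d))‖ * ‖e_c‖ :=
            abs_real_inner_le_norm _ _
        _ = s := by rw [hec, mul_one]
    -- s ≤ α * U
    have hsU : s ≤ α * U := by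
      have h1 : (Submodule.orthogonalProjectionOnto Ec ((Submodule.orthogonalProjectionOnto W z : EuclideanSpace ℝ (Fin d))))
          = Submodule.orthogonalProjectionOnto Ec z := Submodule.orthogonalProjectionOnto_starProjection_of_le hEcleW z
      calc s = ‖(Submodule.orthogonalProjectionOnto Ec
            ((Submodule.orthogonalProjectionOnto W z : EuclideanSpace ℝ (Fin d))) :
              EuclideanSpace ℝ (Fin d))‖ := by rw [h1]
        _ ≤ ‖(Submodule.orthogonalProjectionOnto W z : EuclideanSpace ℝ (Fin d))‖ := hproj_le _ _
        _ ≤ α * U := hcone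
    -- s^2 + U^2 ≤ ‖z‖^2
    have hpyth : s ^ 2 + U ^ 2 ≤ ‖z‖ ^ 2 := by
      have h1 := Submodule.norm_sq_eq_add_norm_sq_projection z Ec
      simp only [Submodule.coe_norm] at h1
      have h2 : (Submodule.orthogonalProjectionOnto Eu
          ((Submodule.orthogonalProjectionOnto Ecᗮ z : EuclideanSpace ℝ (Fin d))))
          = Submodule.orthogonalProjectionOnto Eu z := Submodule.orthogonalProjectionOnto_starProjection_of_le horth₃ z
      have h3 : U ≤ ‖(Submodule.orthogonalProjectionOnto Ecᗮ z : EuclideanSpace ℝ (Fin d))‖ := by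
        rw [hU, ← h2]; exact hproj_le _ _
      have h4 : U ^ 2 ≤ ‖(Submodule.orthogonalProjectionOnto Ecᗮ z : EuclideanSpace ℝ (Fin d))‖ ^ 2 :=
        pow_le_pow_left₀ hUnn h3 2
      linarith
    -- core inequality
    have hcore : (inner ℝ z e_c : ℝ) ^ 2 * (1 + α ^ 2) ≤ α ^ 2 * ‖z‖ ^ 2 :=
      real_cone_core _ _ _ _ _ hsnn hUnn hinner hsU hpyth
    -- norm of projection onto span singleton
    have hspan : ‖(Submodule.orthogonalProjectionOnto (ℝ ∙ z) e_c : EuclideanSpace ℝ (Fin d))‖ ^ 2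
        = (inner ℝ z e_c : ℝ) ^ 2 / ‖z‖ ^ 2 := by
      rw [← Submodule.starProjection_apply, Submodule.starProjection_singleton]
      rw [norm_smul, Real.norm_eq_abs, mul_pow, sq_abs, div_pow]
      have hz2 : (‖z‖ : ℝ) ^ 2 ≠ 0 := by positivity
      field_simp
      simp only [RCLike.ofReal_real_eq_id, id]; ring
    have hfinal : (1 + α ^ 2)⁻¹ ≤
        ‖(Submodule.orthogonalProjectionOnto (ℝ ∙ z)ᗮ e_c : EuclideanSpace ℝ (Fin d))‖ ^ 2 := by
      have h1 := Submodule.norm_sq_eq_add_norm_sq_projection e_c (ℝ ∙ z)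
      simp only [Submodule.coe_norm] at h1
      rw [hec] at h1
      have h2 : (inner ℝ z e_c : ℝ) ^ 2 / ‖z‖ ^ 2 ≤ α ^ 2 / (1 + α ^ 2) := by
        rw [div_le_div_iff₀ (by positivity) hα2pos]
        linarith [hcore]
      have h3 : (1:ℝ) - α ^ 2 / (1 + α ^ 2) = (1 + α ^ 2)⁻¹ := by field_simp; ring
      rw [hspan] at h1
      linarith
    have h4 : ((Real.sqrt (1 + α ^ 2))⁻¹) ^ 2 = (1 + α ^ 2)⁻¹ := by
      rw [← Real.sqrt_inv]
      exact Real.sq_sqrt (by positivity)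
    have h5 : ((Real.sqrt (1 + α ^ 2))⁻¹) ^ 2 ≤
        ‖(Submodule.orthogonalProjectionOnto (ℝ ∙ z)ᗮ e_c : EuclideanSpace ℝ (Fin d))‖ ^ 2 := by
      rw [h4]; exact hfinal
    calc (Real.sqrt (1 + α ^ 2))⁻¹
        = Real.sqrt (((Real.sqrt (1 + α ^ 2))⁻¹) ^ 2) :=
          (Real.sqrt_sq (inv_nonneg.mpr hsqrtpos.le)).symm
      _ ≤ Real.sqrt (‖(Submodule.orthogonalProjectionOnto (ℝ ∙ z)ᗮ e_c : EuclideanSpace ℝ (Fin d))‖ ^ 2) :=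
          Real.sqrt_le_sqrt h5
      _ = ‖(Submodule.orthogonalProjectionOnto (ℝ ∙ z)ᗮ e_c : EuclideanSpace ℝ (Fin d))‖ :=
          Real.sqrt_sq (norm_nonneg _)
  -- A y is nonzero
  have hAy0 : A y ≠ 0 := by
    intro h
    exact hy (hA.injective (by rw [h, map_zero]))
  -- commutation of A with the flow
  have hcomm : ∀ s : ℝ, ∀ x : EuclideanSpace ℝ (Fin d),
      A (exp (s • A) x) = exp (s • A) (A x) := by
    intro s x
    have hcab : Commute (s • A) A := by
      apply ContinuousLinearMap.ext
      intro w
      simp only [ContinuousLinearMap.mul_apply, ContinuousLinearMap.smul_apply, map_smul]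
    have hce := hcab.exp_left
    calc A (exp (s • A) x) = (A * exp (s • A)) x := rfl
      _ = (exp (s • A) * A) x := by rw [← hce.eq]
      _ = exp (s • A) (A x) := rfl
  -- flow inverse
  have hinvexp : ∀ s : ℝ, ∀ x : EuclideanSpace ℝ (Fin d),
      exp (s • A) (exp ((-s) • A) x) = x := by
    intro s x
    have hcab : Commute (s • A) ((-s) • A) := by
      apply ContinuousLinearMap.ext
      intro w
      simp only [ContinuousLinearMap.mul_apply, ContinuousLinearMap.smul_apply, map_smul,
        smul_smul, mul_comm]
    have h1 : exp (s • A) * exp ((-s) • A) = 1 := by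
      rw [← exp_add_of_commute_of_mem_ball (𝕂 := ℝ) hcab ((expSeries_radius_eq_top ℝ (EuclideanSpace ℝ (Fin d) →L[ℝ] EuclideanSpace ℝ (Fin d))).symm ▸ edist_lt_top _ _) ((expSeries_radius_eq_top ℝ (EuclideanSpace ℝ (Fin d) →L[ℝ] EuclideanSpace ℝ (Fin d))).symm ▸ edist_lt_top _ _)]
      have : s • A + (-s) • A = 0 := by
        apply ContinuousLinearMap.ext
        intro w
        simp only [ContinuousLinearMap.add_apply, ContinuousLinearMap.smul_apply,
          ContinuousLinearMap.zero_apply, ← add_smul]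
        norm_num
      rw [this, exp_zero]
    calc exp (s • A) (exp ((-s) • A) x) = (exp (s • A) * exp ((-s) • A)) x := rfl
      _ = x := by rw [h1]; rfl
  -- coercion of projections through Eu = Wᗮ
  have hcoe : ∀ x : EuclideanSpace ℝ (Fin d),
      (Submodule.orthogonalProjectionOnto Eu x : EuclideanSpace ℝ (Fin d)) =
      (Submodule.orthogonalProjectionOnto Wᗮ x : EuclideanSpace ℝ (Fin d)) := by
    intro x; rw [hEuW]
  constructor
  · -- claim 1
    have h0 := hdir 0 ⟨le_refl 0, hT.le⟩
    have h00 : ((-(0:ℝ)) • A) = (0 : EuclideanSpace ℝ (Fin d) →L[ℝ] EuclideanSpace ℝ (Fin d)) := by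
      rw [neg_zero]
      exact zero_smul ℝ A
    rw [h00, exp_zero] at h0
    simp only [ContinuousLinearMap.one_apply] at h0
    exact key (A y) hAy0 h0
  · intro t ht
    obtain ⟨ht0, htT⟩ := ht
    set z : EuclideanSpace ℝ (Fin d) := A (exp ((-t) • A) y) with hzdef
    have hz1 : z = exp ((-t) • A) (A y) := hcomm (-t) y
    have hz2 : exp (t • A) z = A y := by rw [hz1, hinvexp]
    have hzne : z ≠ 0 := by
      intro h
      apply hAy0
      rw [← hz2, h, map_zero]
    have hznpos : (0:ℝ) < ‖z‖ := norm_pos_iff.mpr hzne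
    have hconet := hdir t ⟨ht0, htT⟩
    have hkey_t := key z hzne hconet
    -- the normal vector v and its evolution
    set v : EuclideanSpace ℝ (Fin d) :=
      (Submodule.orthogonalProjectionOnto (ℝ ∙ (A y))ᗮ e_c : EuclideanSpace ℝ (Fin d)) with hvdef
    set c : ℝ := (inner ℝ (A y) e_c : ℝ) / ‖A y‖ ^ 2 with hcdef
    have hv : v = e_c - c • (A y) := by
      have h1 := Submodule.starProjection_add_starProjection_orthogonal (K := ℝ ∙ (A y)) e_c
      have h2 : (Submodule.orthogonalProjectionOnto (ℝ ∙ (A y)) e_c : EuclideanSpace ℝ (Fin d))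
          = c • (A y) := by
        simpa [hcdef] using Submodule.starProjection_singleton ℝ (v := A y) e_c
      rw [hvdef, eq_sub_iff_add_eq, ← h2]
      rw [add_comm]
      exact h1
    have hexpv : exp ((-t) • A) v = Real.exp ((-t) * μ) • e_c - c • z := by
      rw [hv, map_sub, map_smul, myExp_eigen A e_c μ hμ (-t), hz1]
    -- projection of v along the flow
    have hπz : (Submodule.orthogonalProjectionOnto (ℝ ∙ z)ᗮ z : EuclideanSpace ℝ (Fin d)) = 0 := by
      have hmem : z ∈ ((ℝ ∙ z)ᗮ)ᗮ :=
        Submodule.le_orthogonal_orthogonal _ (Submodule.mem_span_singleton_self z)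
      rw [Submodule.orthogonalProjectionOnto_apply_of_mem_orthogonal hmem]
      simp
    have hproj_v : (Submodule.orthogonalProjectionOnto (ℝ ∙ z)ᗮ (exp ((-t) • A) v) :
        EuclideanSpace ℝ (Fin d))
        = Real.exp ((-t) * μ) •
          (Submodule.orthogonalProjectionOnto (ℝ ∙ z)ᗮ e_c : EuclideanSpace ℝ (Fin d)) := by
      rw [hexpv]
      simp only [map_sub, map_smul, Submodule.coe_sub, Submodule.coe_smul]
      rw [hπz, smul_zero, sub_zero]
    -- norm of the scaled linear Poincaré flow
    have hnorm : ‖scaledLPF A (-t) y v‖ = (‖A y‖ / ‖z‖) *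
        (Real.exp ((-t) * μ) *
          ‖(Submodule.orthogonalProjectionOnto (ℝ ∙ z)ᗮ e_c : EuclideanSpace ℝ (Fin d))‖) := by
      have hL : scaledLPF A (-t) y v = (‖A y‖ / ‖z‖) •
          ((Submodule.orthogonalProjectionOnto (ℝ ∙ z)ᗮ (exp ((-t) • A) v) :
            EuclideanSpace ℝ (Fin d))) := rfl
      rw [hL, hproj_v, norm_smul, norm_smul]
      rw [Real.norm_eq_abs, Real.norm_eq_abs, abs_of_nonneg (by positivity : (0:ℝ) ≤ ‖A y‖ / ‖z‖),
        abs_of_pos (Real.exp_pos _)]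
    -- exponential lower bound for the center factor
    have hF2 : C⁻¹ * Real.exp (-(lamC * t)) ≤ Real.exp ((-t) * μ) := by
      have h1 := (hc e_c hecEc t ht0).2
      rw [myExp_eigen A e_c μ hμ t, norm_smul, Real.norm_eq_abs,
        abs_of_pos (Real.exp_pos _), hec] at h1
      simp only [mul_one] at h1
      have h2 : Real.exp ((-t) * μ) = (Real.exp (t * μ))⁻¹ := by
        rw [← Real.exp_neg]; ring_nf
      have h3 : C⁻¹ * Real.exp (-(lamC * t)) = (C * Real.exp (lamC * t))⁻¹ := by
        rw [mul_inv, Real.exp_neg]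
      rw [h2, h3]
      exact inv_anti₀ (by positivity) h1
    -- unstable cone estimates
    set Ut : ℝ := ‖(Submodule.orthogonalProjectionOnto Eu z : EuclideanSpace ℝ (Fin d))‖ with hUtdef
    have hnz : ‖z‖ ≤ Real.sqrt (1 + α ^ 2) * Ut := by
      have h1 := Submodule.norm_sq_eq_add_norm_sq_projection z W
      simp only [Submodule.coe_norm] at h1
      refine real_sq_le _ _ (by positivity) ?_ (norm_nonneg z)
      have h2 : ‖(Submodule.orthogonalProjectionOnto W z : EuclideanSpace ℝ (Fin d))‖ ^ 2
          ≤ α ^ 2 * Ut ^ 2 := by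
        have := pow_le_pow_left₀ (norm_nonneg _) hconet 2
        calc ‖(Submodule.orthogonalProjectionOnto W z : EuclideanSpace ℝ (Fin d))‖ ^ 2
            ≤ (α * Ut) ^ 2 := this
          _ = α ^ 2 * Ut ^ 2 := by ring
      have h3 : ‖(Submodule.orthogonalProjectionOnto Wᗮ z : EuclideanSpace ℝ (Fin d))‖ = Ut := by
        rw [hUtdef, hcoe]
      have h4 : (Real.sqrt (1 + α ^ 2) * Ut) ^ 2 = (1 + α ^ 2) * Ut ^ 2 := by
        rw [mul_pow, Real.sq_sqrt hα2pos.le]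
      rw [h4]
      rw [h3] at h1
      nlinarith [h1, h2]
    -- projection onto Eu commutes with the flow
    have hzdec : (Submodule.orthogonalProjectionOnto W z : EuclideanSpace ℝ (Fin d)) +
        (Submodule.orthogonalProjectionOnto Eu z : EuclideanSpace ℝ (Fin d)) = z := by
      rw [hcoe]
      exact Submodule.starProjection_add_starProjection_orthogonal (K := W) z
    have hqEu : (Submodule.orthogonalProjectionOnto Eu z : EuclideanSpace ℝ (Fin d)) ∈ Eu :=
      SetLike.coe_mem _
    have hpW : (Submodule.orthogonalProjectionOnto W z : EuclideanSpace ℝ (Fin d)) ∈ W :=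
      SetLike.coe_mem _
    have hinvWs : ∀ x ∈ W, (t • A) x ∈ W := by
      intro x hx
      rw [ContinuousLinearMap.smul_apply]
      exact W.smul_mem t (hinvW x hx)
    have hinvEus : ∀ x ∈ Eu, (t • A) x ∈ Eu := by
      intro x hx
      rw [ContinuousLinearMap.smul_apply]
      exact Eu.smul_mem t (hinvu x hx)
    have hWexp : exp (t • A)
        (Submodule.orthogonalProjectionOnto W z : EuclideanSpace ℝ (Fin d)) ∈ W :=
      myExp_invariant _ W hinvWs hpW
    have hEuexp : exp (t • A)
        (Submodule.orthogonalProjectionOnto Eu z : EuclideanSpace ℝ (Fin d)) ∈ Eu :=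
      myExp_invariant _ Eu hinvEus hqEu
    have hPEuAy : (Submodule.orthogonalProjectionOnto Eu (A y) : EuclideanSpace ℝ (Fin d))
        = exp (t • A) (Submodule.orthogonalProjectionOnto Eu z : EuclideanSpace ℝ (Fin d)) := by
      have h1 : A y = exp (t • A) (Submodule.orthogonalProjectionOnto W z : EuclideanSpace ℝ (Fin d))
          + exp (t • A) (Submodule.orthogonalProjectionOnto Eu z : EuclideanSpace ℝ (Fin d)) := by
        rw [← map_add, hzdec, hz2]
      have h2 : Submodule.orthogonalProjectionOnto Eu
          (exp (t • A) (Submodule.orthogonalProjectionOnto W z : EuclideanSpace ℝ (Fin d))) = 0 :=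
        Submodule.orthogonalProjectionOnto_apply_of_mem_orthogonal (hWleEuo hWexp)
      have h3 : (Submodule.orthogonalProjectionOnto Eu
          (exp (t • A) (Submodule.orthogonalProjectionOnto Eu z : EuclideanSpace ℝ (Fin d))) :
            EuclideanSpace ℝ (Fin d))
          = exp (t • A) (Submodule.orthogonalProjectionOnto Eu z : EuclideanSpace ℝ (Fin d)) :=
        Submodule.starProjection_eq_self_iff.mpr hEuexp
      rw [h1, map_add, Submodule.coe_add, h2, h3]
      simp
    -- lower bound for the norm ratio
    have hF1 : (Real.sqrt (1 + α ^ 2))⁻¹ * (C⁻¹ * Real.exp (lamU * t)) * ‖z‖ ≤ ‖A y‖ := by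
      have h1 := hu _ hqEu t ht0
      rw [← hPEuAy] at h1
      have h2 : ‖(Submodule.orthogonalProjectionOnto Eu (A y) : EuclideanSpace ℝ (Fin d))‖ ≤ ‖A y‖ :=
        hproj_le _ _
      have h3 : (Real.sqrt (1 + α ^ 2))⁻¹ * ‖z‖ ≤ Ut := by
        calc (Real.sqrt (1 + α ^ 2))⁻¹ * ‖z‖
            ≤ (Real.sqrt (1 + α ^ 2))⁻¹ * (Real.sqrt (1 + α ^ 2) * Ut) :=
              mul_le_mul_of_nonneg_left hnz (inv_nonneg.mpr hsqrtpos.le)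
          _ = Ut := by field_simp
      calc (Real.sqrt (1 + α ^ 2))⁻¹ * (C⁻¹ * Real.exp (lamU * t)) * ‖z‖
          = (C⁻¹ * Real.exp (lamU * t)) * ((Real.sqrt (1 + α ^ 2))⁻¹ * ‖z‖) := by ring
        _ ≤ (C⁻¹ * Real.exp (lamU * t)) * Ut :=
            mul_le_mul_of_nonneg_left h3 (by positivity)
        _ = C⁻¹ * Real.exp (lamU * t) * Ut := by ring
        _ ≤ ‖(Submodule.orthogonalProjectionOnto Eu (A y) : EuclideanSpace ℝ (Fin d))‖ := h1
        _ ≤ ‖A y‖ := h2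
    have hratio : (Real.sqrt (1 + α ^ 2))⁻¹ * (C⁻¹ * Real.exp (lamU * t)) ≤ ‖A y‖ / ‖z‖ :=
      (le_div_iff₀ hznpos).mpr hF1
    -- combine everything
    rw [hnorm]
    have heq : C⁻¹ ^ 2 * (1 + α ^ 2)⁻¹ * Real.exp ((lamU - lamC) * t)
        = ((Real.sqrt (1 + α ^ 2))⁻¹ * (C⁻¹ * Real.exp (lamU * t))) *
          ((C⁻¹ * Real.exp (-(lamC * t))) * (Real.sqrt (1 + α ^ 2))⁻¹) := by
      have hsq : (Real.sqrt (1 + α ^ 2))⁻¹ * (Real.sqrt (1 + α ^ 2))⁻¹ = (1 + α ^ 2)⁻¹ := by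
        rw [← mul_inv, Real.mul_self_sqrt hα2pos.le]
      have hexp2 : Real.exp (lamU * t) * Real.exp (-(lamC * t))
          = Real.exp ((lamU - lamC) * t) := by
        rw [← Real.exp_add]; ring_nf
      rw [← hsq, ← hexp2]; ring
    rw [heq]
    have hinner2 : (C⁻¹ * Real.exp (-(lamC * t))) * (Real.sqrt (1 + α ^ 2))⁻¹ ≤
        Real.exp ((-t) * μ) *
          ‖(Submodule.orthogonalProjectionOnto (ℝ ∙ z)ᗮ e_c : EuclideanSpace ℝ (Fin d))‖ :=
      mul_le_mul hF2 hkey_t (inv_nonneg.mpr hsqrtpos.le) (Real.exp_pos _).le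
    exact mul_le_mul hratio hinner2 (by positivity) (by positivity)
end

section
/- Let x₀ ∈ E₁, y₀ ∈ E₂ and ρ, R > 0, let g : closedBall(x₀, ρ) ⊆ E₁ → E₂ be β'-Lipschitz and h : closedBall(y₀, R) ⊆ E₂ → E₁ be β-Lipschitz with β·β' < 1. If ‖g(x₀) − y₀‖ + β'·ρ ≤ R and ‖h(g(x₀)) − x₀‖ ≤ (1 − β·β')·ρ, then graph(g) and graph(h) intersect in exactly one point; equivalently, the map x ↦ h(g(x)) is well defined on closedBall(x₀, ρ) and has a unique fixed point there. (This is the geometric mechanism behind the transverse intersections in Lemmas 3.5 and 3.11: two Lipschitz disks of complementary dimensions, tangent to transverse cones and of sufficiently large diameter, must intersect.) -/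
/-- Two Lipschitz graphs of complementary dimensions over an orthogonal splitting
`E = E₁ ⊕ E₂` (`E₂ = E₁ᗮ`), with Lipschitz constants `β'`, `β` satisfying `β·β' < 1` and
compatible size conditions, intersect in exactly one point. Here
`graph g = {x + g x : x ∈ closedBall x₀ ρ ∩ E₁}` and
`graph h = {h y + y : y ∈ closedBall y₀ R ∩ E₂}`. This is the geometric mechanism behind
the transverse intersections in Lemmas 3.5 and 3.11. -/
theorem lipschitz_graphs_intersect {d : ℕ}
    (E₁ : Submodule ℝ (EuclideanSpace ℝ (Fin d)))
    (x₀ y₀ : EuclideanSpace ℝ (Fin d)) (hx₀ : x₀ ∈ E₁) (hy₀ : y₀ ∈ E₁ᗮ)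
    (ρ R : ℝ) (hρ : 0 < ρ) (hR : 0 < R)
    (β β' : ℝ) (hβ : 0 ≤ β) (hβ' : 0 ≤ β') (hββ' : β * β' < 1)
    (g h : EuclideanSpace ℝ (Fin d) → EuclideanSpace ℝ (Fin d))
    (hgE₂ : ∀ x, g x ∈ E₁ᗮ) (hhE₁ : ∀ y, h y ∈ E₁)
    (hgLip : LipschitzOnWith (Real.toNNReal β') g
      (Metric.closedBall x₀ ρ ∩ (E₁ : Set (EuclideanSpace ℝ (Fin d)))))
    (hhLip : LipschitzOnWith (Real.toNNReal β) h
      (Metric.closedBall y₀ R ∩ (E₁ᗮ : Set (EuclideanSpace ℝ (Fin d)))))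
    (hsize₁ : ‖g x₀ - y₀‖ + β' * ρ ≤ R)
    (hsize₂ : ‖h (g x₀) - x₀‖ ≤ (1 - β * β') * ρ) :
    ∃! z : EuclideanSpace ℝ (Fin d),
      (∃ x ∈ Metric.closedBall x₀ ρ ∩ (E₁ : Set (EuclideanSpace ℝ (Fin d))),
        z = x + g x) ∧
      (∃ y ∈ Metric.closedBall y₀ R ∩ (E₁ᗮ : Set (EuclideanSpace ℝ (Fin d))),
        z = h y + y) := by
  classical
  let E := EuclideanSpace ℝ (Fin d)
  set K : Set E := Metric.closedBall x₀ ρ ∩ (E₁ : Set E) with hKdef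
  have hx₀K : x₀ ∈ K := ⟨Metric.mem_closedBall_self hρ.le, hx₀⟩
  have hKclosed : IsClosed K :=
    Metric.isClosed_closedBall.inter (Submodule.closed_of_finiteDimensional E₁)
  -- g maps K into the domain of h
  have hgmem : ∀ x ∈ K, g x ∈ Metric.closedBall y₀ R ∩ (E₁ᗮ : Set E) := by
    intro x hx
    refine ⟨?_, hgE₂ x⟩
    rw [Metric.mem_closedBall]
    calc dist (g x) y₀ ≤ dist (g x) (g x₀) + dist (g x₀) y₀ := dist_triangle _ _ _
      _ ≤ β' * ρ + ‖g x₀ - y₀‖ := by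
          refine add_le_add ?_ (le_of_eq (dist_eq_norm _ _))
          calc dist (g x) (g x₀) ≤ β' * dist x x₀ := by
                simpa [Real.coe_toNNReal β' hβ'] using hgLip.dist_le_mul x hx x₀ hx₀K
            _ ≤ β' * ρ := by
                exact mul_le_mul_of_nonneg_left (Metric.mem_closedBall.1 hx.1) hβ'
      _ ≤ R := by linarith
  have hmaps : ∀ x ∈ K, h (g x) ∈ K := by
    intro x hx
    refine ⟨?_, hhE₁ _⟩
    rw [Metric.mem_closedBall]
    calc dist (h (g x)) x₀ ≤ dist (h (g x)) (h (g x₀)) + dist (h (g x₀)) x₀ :=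
          dist_triangle _ _ _
      _ ≤ β * (β' * ρ) + (1 - β * β') * ρ := by
          refine add_le_add ?_ (by simpa [dist_eq_norm] using hsize₂)
          calc dist (h (g x)) (h (g x₀)) ≤ β * dist (g x) (g x₀) := by
                simpa [Real.coe_toNNReal β hβ] using
                  hhLip.dist_le_mul _ (hgmem x hx) _ (hgmem x₀ hx₀K)
            _ ≤ β * (β' * ρ) := by
                refine mul_le_mul_of_nonneg_left ?_ hβ
                calc dist (g x) (g x₀) ≤ β' * dist x x₀ := by
                      simpa [Real.coe_toNNReal β' hβ'] using
                        hgLip.dist_le_mul x hx x₀ hx₀K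
                  _ ≤ β' * ρ := mul_le_mul_of_nonneg_left
                      (Metric.mem_closedBall.1 hx.1) hβ'
      _ = ρ := by ring
  have hcontr : ∀ x ∈ K, ∀ y ∈ K,
      dist (h (g x)) (h (g y)) ≤ (β * β') * dist x y := by
    intro x hx y hy
    calc dist (h (g x)) (h (g y)) ≤ β * dist (g x) (g y) := by
          simpa [Real.coe_toNNReal β hβ] using
            hhLip.dist_le_mul _ (hgmem x hx) _ (hgmem y hy)
      _ ≤ β * (β' * dist x y) := by
          refine mul_le_mul_of_nonneg_left ?_ hβ
          simpa [Real.coe_toNNReal β' hβ'] using hgLip.dist_le_mul x hx y hy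
      _ = (β * β') * dist x y := by ring
  -- decomposition uniqueness
  have hdec : ∀ a b a' b' : E, a ∈ E₁ → a' ∈ E₁ → b ∈ E₁ᗮ → b' ∈ E₁ᗮ →
      a + b = a' + b' → a = a' ∧ b = b' := by
    intro a b a' b' ha ha' hb hb' hab
    have h1 : a - a' = b' - b := by
      have := hab
      linear_combination (norm := abel) this
    have hmem1 : a - a' ∈ E₁ := Submodule.sub_mem _ ha ha'
    have hmem2 : a - a' ∈ E₁ᗮ := h1 ▸ Submodule.sub_mem _ hb' hb
    have hz : a - a' = 0 := by
      have := (Submodule.orthogonal_disjoint E₁).le_bot ⟨hmem1, hmem2⟩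
      simpa using this
    constructor
    · exact sub_eq_zero.1 hz
    · have : b' - b = 0 := by rw [← h1, hz]
      exact (sub_eq_zero.1 this).symm
  -- Banach fixed point on K
  haveI : Nonempty K := ⟨⟨x₀, hx₀K⟩⟩
  haveI : CompleteSpace K := hKclosed.completeSpace_coe
  set F : K → K := fun x => ⟨h (g x), hmaps x x.2⟩ with hFdef
  have hF : ContractingWith (Real.toNNReal (β * β')) F := by
    constructor
    · exact_mod_cast Real.toNNReal_lt_one.2 hββ'
    · apply LipschitzWith.of_dist_le_mul
      intro a b
      have := hcontr a a.2 b b.2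
      simpa [Subtype.dist_eq, Real.coe_toNNReal _ (mul_nonneg hβ hβ')] using this
  set xs : K := hF.fixedPoint F with hxs
  have hfix : h (g (xs : E)) = (xs : E) := by
    have := hF.fixedPoint_isFixedPt
    exact congrArg Subtype.val this
  refine ⟨(xs : E) + g (xs : E), ⟨⟨xs, xs.2, rfl⟩, ⟨g (xs : E), hgmem _ xs.2, by
    rw [hfix]⟩⟩, ?_⟩
  rintro z ⟨⟨x, hx, rfl⟩, ⟨y, hy, hzy⟩⟩
  obtain ⟨hx1, hy1⟩ := hdec x (g x) (h y) y hx.2 (hhE₁ y) (hgE₂ x) hy.2 hzy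
  have hfixx : h (g x) = x := by rw [hy1]; exact hx1.symm
  have : (⟨x, hx⟩ : K) = xs := by
    apply hF.fixedPoint_unique'
    · exact Subtype.ext hfixx
    · exact hF.fixedPoint_isFixedPt
  have hxval : x = (xs : E) := congrArg Subtype.val this
  rw [hxval]
end

section
/- Let w ∈ E ∖ {0} satisfy ‖exp(tA)w‖ ≤ C·exp(a·t)·‖w‖ for all t ≥ 0 (for instance, w in the stable subspace of a hyperbolic linear vector field A). Then for every δ with 0 < δ ≤ ‖w‖: log(‖w‖/δ)/‖A‖ ≤ Leb{t ≥ 0 : ‖exp(tA)w‖ ≥ δ} ≤ log(C·‖w‖/δ)/(−a). (Transit times between two spheres inside the stable cone are comparable to the logarithm of the ratio of the flow speeds at the endpoints, as used in the proof of Lemma 3.4.) -/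
open MeasureTheory

lemma my_norm_exp_le {𝔸 : Type*} [NormedRing 𝔸] [NormedAlgebra ℝ 𝔸] [CompleteSpace 𝔸]
    [NormOneClass 𝔸] (x : 𝔸) : ‖NormedSpace.exp x‖ ≤ Real.exp ‖x‖ := by
  rw [NormedSpace.exp_eq_tsum ℝ]
  have h1 : ‖∑' n : ℕ, (Nat.factorial n : ℝ)⁻¹ • x ^ n‖ ≤ ∑' n : ℕ, ‖(Nat.factorial n : ℝ)⁻¹ • x ^ n‖ :=
    norm_tsum_le_tsum_norm (NormedSpace.norm_expSeries_summable' x)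
  have h2 : ∑' n : ℕ, ‖(Nat.factorial n : ℝ)⁻¹ • x ^ n‖ ≤ ∑' n : ℕ, ‖x‖ ^ n / (Nat.factorial n : ℝ) := by
    refine Summable.tsum_le_tsum (fun n => ?_) (NormedSpace.norm_expSeries_summable' x)
      (Real.summable_pow_div_factorial ‖x‖)
    rw [norm_smul, norm_inv, Real.norm_natCast, inv_mul_eq_div]
    gcongr
    exact norm_pow_le x n
  have h3 : ∑' n : ℕ, ‖x‖ ^ n / (Nat.factorial n : ℝ) = Real.exp ‖x‖ := by
    rw [Real.exp_eq_exp_ℝ, NormedSpace.exp_eq_tsum_div]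
  linarith

/-- Transit times between two spheres inside the stable cone are comparable to the
logarithm of the ratio of the flow speeds at the endpoints (as used in the proof of
Lemma 3.4): if `‖exp(tA) w‖ ≤ C·exp(a·t)·‖w‖` for all `t ≥ 0`, with `C ≥ 1`, `a < 0`,
then for `0 < δ ≤ ‖w‖`,
`log(‖w‖/δ)/‖A‖ ≤ Leb {t ≥ 0 : ‖exp(tA) w‖ ≥ δ} ≤ log(C·‖w‖/δ)/(−a)`. -/
theorem transit_time_log_comparable {d : ℕ}
    (A : EuclideanSpace ℝ (Fin d) →L[ℝ] EuclideanSpace ℝ (Fin d)) (hA : A ≠ 0)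
    (C a : ℝ) (hC : 1 ≤ C) (ha : a < 0)
    (w : EuclideanSpace ℝ (Fin d)) (hw : w ≠ 0)
    (hdecay : ∀ t : ℝ, 0 ≤ t →
      ‖NormedSpace.exp (t • A) w‖ ≤ C * Real.exp (a * t) * ‖w‖)
    (δ : ℝ) (hδ : 0 < δ) (hδw : δ ≤ ‖w‖) :
    ENNReal.ofReal (Real.log (‖w‖ / δ) / ‖A‖) ≤
      volume {t : ℝ | 0 ≤ t ∧ δ ≤ ‖NormedSpace.exp (t • A) w‖} ∧
    volume {t : ℝ | 0 ≤ t ∧ δ ≤ ‖NormedSpace.exp (t • A) w‖} ≤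
      ENNReal.ofReal (Real.log (C * ‖w‖ / δ) / (-a)) := by
  haveI hEnt : Nontrivial (EuclideanSpace ℝ (Fin d)) := nontrivial_of_ne w 0 hw
  have hAn : 0 < ‖A‖ := norm_pos_iff.mpr hA
  have hwpos : 0 < ‖w‖ := norm_pos_iff.mpr hw
  have hlog1 : 0 ≤ Real.log (‖w‖ / δ) := Real.log_nonneg ((one_le_div hδ).mpr hδw)
  constructor
  · -- lower bound
    have hsub : Set.Icc 0 (Real.log (‖w‖ / δ) / ‖A‖) ⊆
        {t : ℝ | 0 ≤ t ∧ δ ≤ ‖NormedSpace.exp (t • A) w‖} := by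
      rintro t ⟨ht0, htL⟩
      refine ⟨ht0, ?_⟩
      have hmul : NormedSpace.exp (-(t • A)) * NormedSpace.exp (t • A) = 1 := by
        let +nondep : NormedAlgebra ℚ (EuclideanSpace ℝ (Fin d) →L[ℝ] EuclideanSpace ℝ (Fin d)) :=
          .restrictScalars ℚ ℝ _
        rw [← NormedSpace.exp_add_of_commute ((Commute.refl (t • A)).neg_left),
          neg_add_cancel, NormedSpace.exp_zero]
      have hww : (NormedSpace.exp (-(t • A))) (NormedSpace.exp (t • A) w) = w := by
        have := congrArg (fun B : EuclideanSpace ℝ (Fin d) →L[ℝ] EuclideanSpace ℝ (Fin d)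
          => B w) hmul
        simpa using this
      have hexp : ‖NormedSpace.exp (-(t • A))‖ ≤ Real.exp (t * ‖A‖) := by
        refine (my_norm_exp_le _).trans ?_
        rw [norm_neg]
        refine Real.exp_le_exp.mpr ((norm_smul_le t A).trans_eq ?_)
        rw [Real.norm_eq_abs, abs_of_nonneg ht0]
      have hbound : ‖w‖ ≤ Real.exp (t * ‖A‖) * ‖NormedSpace.exp (t • A) w‖ := by
        calc ‖w‖ = ‖(NormedSpace.exp (-(t • A))) (NormedSpace.exp (t • A) w)‖ := by
              rw [hww]
          _ ≤ ‖NormedSpace.exp (-(t • A))‖ * ‖NormedSpace.exp (t • A) w‖ :=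
              ContinuousLinearMap.le_opNorm _ _
          _ ≤ Real.exp (t * ‖A‖) * ‖NormedSpace.exp (t • A) w‖ :=
              mul_le_mul_of_nonneg_right hexp (norm_nonneg _)
      have h1 : ‖w‖ * Real.exp (-(t * ‖A‖)) ≤ ‖NormedSpace.exp (t • A) w‖ := by
        rw [Real.exp_neg, mul_inv_le_iff₀ (Real.exp_pos _), mul_comm]
        exact hbound
      refine le_trans ?_ h1
      have htA : t * ‖A‖ ≤ Real.log (‖w‖ / δ) := by
        rw [le_div_iff₀ hAn] at htL
        exact htL
      calc δ = ‖w‖ * (δ / ‖w‖) := by field_simp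
        _ = ‖w‖ * Real.exp (-(Real.log (‖w‖ / δ))) := by
            rw [← Real.log_inv, inv_div, Real.exp_log (by positivity)]
        _ ≤ ‖w‖ * Real.exp (-(t * ‖A‖)) := by
            have := Real.exp_le_exp.mpr (neg_le_neg htA)
            exact mul_le_mul_of_nonneg_left this hwpos.le
    calc ENNReal.ofReal (Real.log (‖w‖ / δ) / ‖A‖)
        = volume (Set.Icc (0:ℝ) (Real.log (‖w‖ / δ) / ‖A‖)) := by
          rw [Real.volume_Icc, sub_zero]
      _ ≤ _ := measure_mono hsub
  · -- upper bound
    have hsub : {t : ℝ | 0 ≤ t ∧ δ ≤ ‖NormedSpace.exp (t • A) w‖} ⊆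
        Set.Icc 0 (Real.log (C * ‖w‖ / δ) / (-a)) := by
      rintro t ⟨ht0, htδ⟩
      refine ⟨ht0, ?_⟩
      have h1 : δ ≤ C * Real.exp (a * t) * ‖w‖ := htδ.trans (hdecay t ht0)
      have h2 : δ / (C * ‖w‖) ≤ Real.exp (a * t) := by
        rw [div_le_iff₀ (by positivity)]
        calc δ ≤ C * Real.exp (a * t) * ‖w‖ := h1
          _ = Real.exp (a * t) * (C * ‖w‖) := by ring
      have h3 : Real.log (δ / (C * ‖w‖)) ≤ a * t := by
        calc Real.log (δ / (C * ‖w‖)) ≤ Real.log (Real.exp (a * t)) :=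
              Real.log_le_log (by positivity) h2
          _ = a * t := Real.log_exp _
      have h4 : (-a) * t ≤ Real.log (C * ‖w‖ / δ) := by
        have heq : Real.log (C * ‖w‖ / δ) = - Real.log (δ / (C * ‖w‖)) := by
          rw [← Real.log_inv, inv_div]
        rw [heq]; linarith
      rw [le_div_iff₀ (by linarith : (0:ℝ) < -a)]
      linarith
    calc volume {t : ℝ | 0 ≤ t ∧ δ ≤ ‖NormedSpace.exp (t • A) w‖}
        ≤ volume (Set.Icc (0:ℝ) (Real.log (C * ‖w‖ / δ) / (-a))) := measure_mono hsub
      _ = ENNReal.ofReal (Real.log (C * ‖w‖ / δ) / (-a)) := by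
          rw [Real.volume_Icc, sub_zero]
end
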